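/- arXiv:2603.04504 — 10 statements merged into one kernel-verified Lean document; each statement's English description precedes it below -/
import Mathlib

section
/- For all natural numbers k and a, the sum over all k-tuples (q_1,…,q_k) of nonnegative integers of the product ∏_{l=1}^{k} C₀(l−1+a−∑_{i=1}^{l−1} q_i, q_l) equals k!·(k+1)^a. (Every nonzero summand satisfies q_1+⋯+q_k ≤ a+k−1, so the sum may equivalently be taken over the finite set of tuples with q_1+⋯+q_k ≤ a+k−1.) -/
/-- `C₀(a,b)`: binomial coefficient `a choose b` for an integer `a` and natural `b`,
with the convention that it vanishes whenever `a < 0` (and also when `b > a`). -/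
def C0 (a : ℤ) (b : ℕ) : ℕ := if 0 ≤ a then a.toNat.choose b else 0

open Finset

lemma sum_Iio_cons (k : ℕ) (x : ℕ) (q : Fin k → ℕ) (j : Fin k) :
    ∑ i ∈ Finset.Iio (j.succ), ((Fin.cons x q : Fin (k+1) → ℕ) i : ℤ)
      = x + ∑ i ∈ Finset.Iio j, (q i : ℤ) := by
  have h1 : (Finset.Iio (j.succ) : Finset (Fin (k+1))) = Finset.univ.filter (· < j.succ) := by
    ext i; simp
  have h2 : (Finset.Iio j : Finset (Fin k)) = Finset.univ.filter (· < j) := by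
    ext i; simp
  rw [h1, h2, Finset.sum_filter, Finset.sum_filter, Fin.sum_univ_succ]
  simp [Fin.succ_lt_succ_iff, Fin.succ_pos]

lemma split (k N : ℕ) (f : (Fin (k+1) → ℕ) → ℕ) :
    ∑ s ∈ Finset.range (N+1), ∑ q ∈ Finset.Nat.antidiagonalTuple (k+1) s, f q
    = ∑ x ∈ Finset.range (N+1), ∑ t ∈ Finset.range (N+1-x),
        ∑ q ∈ Finset.Nat.antidiagonalTuple k t, f (Fin.cons x q) := by
  rw [Finset.sum_sigma' (Finset.range (N+1)) _ (fun _ q => f q)]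
  rw [Finset.sum_congr rfl (fun x _ =>
    Finset.sum_sigma' (Finset.range (N+1-x)) _ (fun _ q => f (Fin.cons x q)))]
  rw [Finset.sum_sigma' (Finset.range (N+1))
    (fun x => (Finset.range (N+1-x)).sigma (Finset.Nat.antidiagonalTuple k))
    (fun x p => f (Fin.cons x p.2))]
  refine Finset.sum_nbij' (fun p => ⟨p.2 0, p.1 - p.2 0, Fin.tail p.2⟩)
    (fun p => ⟨p.2.1 + p.1, Fin.cons p.1 p.2.2⟩) ?_ ?_ ?_ ?_ ?_
  · rintro ⟨s, q⟩ hp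
    simp only [Finset.mem_sigma, Finset.mem_range, Finset.Nat.mem_antidiagonalTuple] at hp ⊢
    obtain ⟨hs, hq⟩ := hp
    have hsum : q 0 + ∑ i, Fin.tail q i = s := by
      rw [← hq, Fin.sum_univ_succ]; rfl
    refine ⟨by omega, by omega, by omega⟩
  · rintro ⟨x, t, q⟩ hp
    simp only [Finset.mem_sigma, Finset.mem_range, Finset.Nat.mem_antidiagonalTuple] at hp ⊢
    obtain ⟨hx, ht, hq⟩ := hp
    constructor
    · omega
    · rw [Fin.sum_univ_succ]; simp [hq]; omega
  · rintro ⟨s, q⟩ hp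
    simp only [Finset.mem_sigma, Finset.mem_range, Finset.Nat.mem_antidiagonalTuple] at hp
    obtain ⟨hs, hq⟩ := hp
    have hsum : q 0 + ∑ i, Fin.tail q i = s := by
      rw [← hq, Fin.sum_univ_succ]; rfl
    simp only [Fin.cons_self_tail]
    have : s - q 0 + q 0 = s := by omega
    simp [this]
  · rintro ⟨x, t, q⟩ hp
    simp only [Finset.mem_sigma, Finset.mem_range, Finset.Nat.mem_antidiagonalTuple] at hp
    simp [Fin.tail_cons]
  · rintro ⟨s, q⟩ hp
    simp [Fin.cons_self_tail]

lemma binom_sum (k b : ℕ) :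
    ∑ x ∈ Finset.range (b+1), b.choose x * (k.factorial * (k+1)^(b+1-x))
      = (k+1).factorial * (k+2)^b := by
  have h : ((1 : ℕ) + (k+1))^b
      = ∑ i ∈ Finset.range (b+1), 1^i * (k+1)^(b-i) * b.choose i := add_pow 1 (k+1) b
  simp only [one_pow, one_mul] at h
  have h2 : (1 : ℕ) + (k+1) = k+2 := by omega
  rw [h2] at h
  rw [Nat.factorial_succ, mul_assoc, h, Finset.mul_sum, Finset.mul_sum]
  apply Finset.sum_congr rfl
  intro x hx
  have hxb : x ≤ b := by simpa [Nat.lt_succ_iff] using hx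
  have : b + 1 - x = (b - x) + 1 := by omega
  rw [this, pow_succ]
  ring

lemma main_lemma : ∀ (k b N : ℕ), b + k ≤ N + 1 →
    ∑ s ∈ Finset.range (N+1), ∑ q ∈ Finset.Nat.antidiagonalTuple k s,
      ∏ l : Fin k, C0 ((l : ℤ) + b - ∑ i ∈ Finset.Iio l, (q i : ℤ)) (q l)
    = k.factorial * (k + 1) ^ b := by
  intro k
  induction k with
  | zero =>
    intro b N hb
    have : ∀ s ∈ Finset.range (N+1), (∑ q ∈ Finset.Nat.antidiagonalTuple 0 s,
        ∏ l : Fin 0, C0 ((l : ℤ) + b - ∑ i ∈ Finset.Iio l, (q i : ℤ)) (q l))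
        = if s = 0 then 1 else 0 := by
      intro s _
      match s with
      | 0 => simp [Finset.Nat.antidiagonalTuple_zero_zero]
      | n+1 => simp [Finset.Nat.antidiagonalTuple_zero_succ]
    rw [Finset.sum_congr rfl this, Finset.sum_ite_eq' (Finset.range (N+1)) 0 (fun _ => 1)]
    simp
  | succ k ih =>
    intro b N hb
    rw [split k N (fun q => ∏ l : Fin (k+1), C0 ((l : ℤ) + b - ∑ i ∈ Finset.Iio l, (q i : ℤ)) (q l))]
    have hbN : b + k ≤ N := by omega
    have key : ∀ x ∈ Finset.range (N+1),
        (∑ t ∈ Finset.range (N+1-x), ∑ q ∈ Finset.Nat.antidiagonalTuple k t,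
          ∏ l : Fin (k+1), C0 ((l : ℤ) + b - ∑ i ∈ Finset.Iio l,
            ((Fin.cons x q : Fin (k+1) → ℕ) i : ℤ)) ((Fin.cons x q : Fin (k+1) → ℕ) l))
        = C0 b x * (k.factorial * (k+1)^(b+1-x)) := by
      intro x hx
      have hxN : x ≤ N := by simpa [Nat.lt_succ_iff] using hx
      have hprod : ∀ q : Fin k → ℕ,
          (∏ l : Fin (k+1), C0 ((l : ℤ) + b - ∑ i ∈ Finset.Iio l,
            ((Fin.cons x q : Fin (k+1) → ℕ) i : ℤ)) ((Fin.cons x q : Fin (k+1) → ℕ) l))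
          = C0 b x * ∏ l : Fin k,
              C0 ((l : ℤ) + ((b : ℤ) + 1 - x) - ∑ i ∈ Finset.Iio l, (q i : ℤ)) (q l) := by
        intro q
        rw [Fin.prod_univ_succ]
        have hIio0 : (Finset.Iio (0 : Fin (k+1))) = ∅ := by
          ext i; simp [Fin.not_lt_zero]
        congr 1
        · simp [hIio0]
        · apply Finset.prod_congr rfl
          intro j _
          rw [sum_Iio_cons]
          congr 1
          push_cast [Fin.val_succ]
          ring
      simp only [hprod, ← Finset.mul_sum]
      by_cases hxb : x ≤ b
      · congr 1
        have hc : ((b + 1 - x : ℕ) : ℤ) = (b : ℤ) + 1 - x := by omega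
        have hN' : N + 1 - x = (N - x) + 1 := by omega
        rw [hN', ← hc]
        exact ih (b+1-x) (N-x) (by omega)
      · have h0 : C0 b x = 0 := by
          simp [C0, Nat.choose_eq_zero_of_lt (by omega : b < x)]
        rw [h0, zero_mul, zero_mul]
    rw [Finset.sum_congr rfl key]
    have hsub : Finset.range (b+1) ⊆ Finset.range (N+1) := by
      apply Finset.range_subset_range.2; omega
    rw [← Finset.sum_subset hsub (by
      intro x _ hxb
      have : b < x := by
        simp only [Finset.mem_range, Nat.lt_succ_iff, not_le] at hxb
        omega
      simp [C0, Nat.choose_eq_zero_of_lt this])]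
    have hC : ∀ x ∈ Finset.range (b+1), C0 b x * (k.factorial * (k+1)^(b+1-x))
        = b.choose x * (k.factorial * (k+1)^(b+1-x)) := by
      intro x _
      simp [C0]
    rw [Finset.sum_congr rfl hC, binom_sum]

/-- For all naturals `k, a`,
`∑_{(q₁,…,q_k)} ∏_{l=1}^{k} C₀(l-1+a-∑_{i<l} qᵢ, q_l) = k! (k+1)^a`,
where the sum runs over the finite set of `k`-tuples of nonnegative integers
with `q₁+⋯+q_k ≤ a+k-1` (which contains the support of the summand). -/
theorem sum_weak_comp_binomial (k a : ℕ) :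
    ∑ s ∈ Finset.range (a + k - 1 + 1), ∑ q ∈ Finset.Nat.antidiagonalTuple k s,
      ∏ l : Fin k, C0 ((l : ℤ) + a - ∑ i ∈ Finset.Iio l, (q i : ℤ)) (q l)
      = k.factorial * (k + 1) ^ a := by
  exact main_lemma k a (a + k - 1) (by omega)
end

section
/- For every natural number m, ∑_{(q_1,…,q_{m+1}) ∈ W_{m+1}^{m}} ∏_{l=1}^{m+1} C₀(l−1−∑_{i=1}^{l−1} q_i, q_l) = m!. -/
open Polynomial Finset

lemma C0_natCast (a b : ℕ) : C0 (a : ℤ) b = a.choose b := by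
  simp [C0]

/-- Decomposition of a sum over `antidiagonalTuple (k+1) n`. -/
lemma sum_antidiagonalTuple_succ {M : Type*} [AddCommMonoid M] (k n : ℕ)
    (f : (Fin (k + 1) → ℕ) → M) :
    ∑ q ∈ Finset.Nat.antidiagonalTuple (k + 1) n, f q
      = ∑ ab ∈ Finset.HasAntidiagonal.antidiagonal n,
          ∑ p ∈ Finset.Nat.antidiagonalTuple k ab.2, f (Fin.cons ab.1 p) := by
  rw [Finset.sum_sigma']
  refine (Finset.sum_nbij' (i := fun x => Fin.cons x.1.1 x.2)
    (j := fun q => (⟨(q 0, ∑ i, q (Fin.succ i)), Fin.tail q⟩ :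
      Σ _ab : ℕ × ℕ, (Fin k → ℕ))) ?_ ?_ ?_ ?_ ?_).symm
  · intro x hx
    rw [Finset.mem_sigma, Finset.HasAntidiagonal.mem_antidiagonal, Finset.Nat.mem_antidiagonalTuple] at hx
    rw [Finset.Nat.mem_antidiagonalTuple, Fin.sum_cons, hx.2, hx.1]
  · intro q hq
    rw [Finset.Nat.mem_antidiagonalTuple, Fin.sum_univ_succ] at hq
    simp only [Finset.mem_sigma, Finset.HasAntidiagonal.mem_antidiagonal, Finset.Nat.mem_antidiagonalTuple]
    exact ⟨hq, rfl⟩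
  · rintro ⟨⟨a, b⟩, p⟩ hx
    rw [Finset.mem_sigma, Finset.HasAntidiagonal.mem_antidiagonal, Finset.Nat.mem_antidiagonalTuple] at hx
    simp only [Fin.cons_zero, Fin.cons_succ, Fin.tail_cons]
    exact congrArg (fun t => (⟨(a, t), p⟩ : Σ _ab : ℕ × ℕ, (Fin k → ℕ))) hx.2
  · intro q hq
    exact Fin.cons_self_tail q
  · intro x hx
    rfl

/-- Splitting an `Iio`-sum over `Fin (k+1)` at a successor index. -/
lemma sum_Iio_succ' {M : Type*} [AddCommMonoid M] {k : ℕ} (f : Fin (k + 1) → M) (l : Fin k) :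
    ∑ i ∈ Finset.Iio (Fin.succ l), f i = f 0 + ∑ i ∈ Finset.Iio l, f (Fin.succ i) := by
  have h : Finset.Iio (Fin.succ l)
      = Finset.cons 0 ((Finset.Iio l).map ⟨Fin.succ, Fin.succ_injective k⟩) (by simp [Fin.succ_ne_zero]) := by
    ext x
    simp only [Finset.mem_Iio, Finset.mem_cons, Finset.mem_map,
      Function.Embedding.coeFn_mk]
    constructor
    · intro hx
      induction x using Fin.cases with
      | zero => exact Or.inl rfl
      | succ j => exact Or.inr ⟨j, by simpa [Fin.succ_lt_succ_iff] using hx, rfl⟩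
    · rintro (rfl | ⟨j, hj, rfl⟩)
      · exact Fin.succ_pos l
      · exact Fin.succ_lt_succ_iff.mpr hj
  rw [h, Finset.sum_cons, Finset.sum_map]
  rfl

/-- The generating polynomial: `(1+kX)^c · ∏_{j<k} (1+jX)`. -/
noncomputable def genPoly (k c : ℕ) : Polynomial ℕ :=
  (1 + (k : Polynomial ℕ) * X) ^ c * ∏ j ∈ Finset.range k, (1 + (j : Polynomial ℕ) * X)

lemma genPoly_succ (k c : ℕ) :
    genPoly (k + 1) c
      = ∑ a ∈ Finset.range (c + 1), C (c.choose a) * X ^ a * genPoly k (c + 1 - a) := by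
  have key : ∀ a ∈ Finset.range (c + 1),
      C (c.choose a) * X ^ a * genPoly k (c + 1 - a)
        = (X ^ a * (1 + (k : Polynomial ℕ) * X) ^ (c - a) * ((c.choose a : ℕ) : Polynomial ℕ)) *
            ((1 + (k : Polynomial ℕ) * X) *
              ∏ j ∈ Finset.range k, (1 + (j : Polynomial ℕ) * X)) := by
    intro a ha
    rw [Finset.mem_range] at ha
    have h2 : c + 1 - a = (c - a) + 1 := by omega
    have hC : (C (c.choose a) : Polynomial ℕ) = ((c.choose a : ℕ) : Polynomial ℕ) := by simp
    rw [genPoly, h2, pow_succ, hC]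
    ring
  rw [Finset.sum_congr rfl key, ← Finset.sum_mul, ← add_pow]
  have hx : (X : Polynomial ℕ) + (1 + (k : Polynomial ℕ) * X)
      = 1 + ((k + 1 : ℕ) : Polynomial ℕ) * X := by
    push_cast
    ring
  rw [hx, genPoly, Finset.prod_range_succ]
  ring

lemma genPoly_coeff_succ (k c n : ℕ) :
    (genPoly (k + 1) c).coeff n
      = ∑ ab ∈ Finset.HasAntidiagonal.antidiagonal n,
          c.choose ab.1 * (genPoly k (c + 1 - ab.1)).coeff ab.2 := by
  set F : ℕ → ℕ := fun a =>
    if a ≤ n then c.choose a * (genPoly k (c + 1 - a)).coeff (n - a) else 0 with hF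
  have coeff_term : ∀ a : ℕ,
      (C (c.choose a) * X ^ a * genPoly k (c + 1 - a)).coeff n = F a := by
    intro a
    have : C (c.choose a) * X ^ a * genPoly k (c + 1 - a)
        = genPoly k (c + 1 - a) * C (c.choose a) * X ^ a := by ring
    rw [this, Polynomial.coeff_mul_X_pow', Polynomial.coeff_mul_C]
    by_cases h : a ≤ n <;> simp [hF, h, mul_comm]
  have lhs : (genPoly (k + 1) c).coeff n = ∑ a ∈ Finset.range (c + 1), F a := by
    rw [genPoly_succ, Polynomial.finset_sum_coeff]
    exact Finset.sum_congr rfl fun a _ => coeff_term a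
  have rhs : ∑ ab ∈ Finset.HasAntidiagonal.antidiagonal n,
      c.choose ab.1 * (genPoly k (c + 1 - ab.1)).coeff ab.2
      = ∑ a ∈ Finset.range (n + 1), F a := by
    rw [Finset.Nat.sum_antidiagonal_eq_sum_range_succ_mk]
    refine Finset.sum_congr rfl fun a ha => ?_
    rw [Finset.mem_range, Nat.lt_succ_iff] at ha
    simp [hF, ha]
  have e1 : ∑ a ∈ Finset.range (c + 1), F a
      = ∑ a ∈ Finset.range (c + 1 + (n + 1)), F a := by
    refine Finset.sum_subset (Finset.range_subset_range.mpr (by omega)) fun a _ ha => ?_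
    rw [Finset.mem_range, Nat.lt_succ_iff, not_le] at ha
    simp only [hF]
    split
    · rw [Nat.choose_eq_zero_of_lt ha, zero_mul]
    · rfl
  have e2 : ∑ a ∈ Finset.range (n + 1), F a
      = ∑ a ∈ Finset.range (c + 1 + (n + 1)), F a := by
    refine Finset.sum_subset (Finset.range_subset_range.mpr (by omega)) fun a _ ha => ?_
    rw [Finset.mem_range, Nat.lt_succ_iff, not_le] at ha
    simp only [hF]
    rw [if_neg (by omega)]
  rw [lhs, rhs, e1, e2]

/-- The generalized sum equals a coefficient of `genPoly`. -/
lemma sum_eq_genPoly_coeff (k : ℕ) : ∀ c n : ℕ,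
    ∑ q ∈ Finset.Nat.antidiagonalTuple k n,
      ∏ l : Fin k, C0 ((l : ℤ) + (c : ℤ) - ∑ i ∈ Finset.Iio l, (q i : ℤ)) (q l)
      = (genPoly k c).coeff n := by
  induction k with
  | zero =>
    intro c n
    have h : genPoly 0 c = 1 := by simp [genPoly]
    rw [h]
    cases n with
    | zero => simp
    | succ n => simp [Polynomial.coeff_one]
  | succ k ih =>
    intro c n
    rw [sum_antidiagonalTuple_succ, genPoly_coeff_succ]
    apply Finset.sum_congr rfl
    rintro ⟨a, b⟩ hab
    simp only
    have prod_eq : ∀ p ∈ Finset.Nat.antidiagonalTuple k b,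
        ∏ l : Fin (k + 1),
          C0 ((l : ℤ) + (c : ℤ) - ∑ i ∈ Finset.Iio l, ((Fin.cons a p : Fin (k+1) → ℕ) i : ℤ))
            ((Fin.cons a p : Fin (k+1) → ℕ) l)
          = C0 (c : ℤ) a *
            ∏ l : Fin k,
              C0 ((l : ℤ) + 1 + (c : ℤ) - (a : ℤ) - ∑ i ∈ Finset.Iio l, (p i : ℤ)) (p l) := by
      intro p _
      rw [Fin.prod_univ_succ]
      congr 1
      · have hIio : Finset.Iio (0 : Fin (k + 1)) = ∅ := by
          ext x; simp
        simp [hIio]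
      · apply Finset.prod_congr rfl
        intro l _
        rw [sum_Iio_succ' (fun i => ((Fin.cons a p : Fin (k+1) → ℕ) i : ℤ)) l]
        simp only [Fin.cons_zero, Fin.cons_succ]
        congr 1
        push_cast [Fin.val_succ]
        ring
    rw [Finset.sum_congr rfl prod_eq, ← Finset.mul_sum]
    by_cases hac : a ≤ c
    · have harith : ∀ l : Fin k, ∀ S : ℤ,
          (l : ℤ) + 1 + (c : ℤ) - (a : ℤ) - S = (l : ℤ) + ((c + 1 - a : ℕ) : ℤ) - S := by
        intro l S
        have h3 : ((c + 1 - a : ℕ) : ℤ) = (c : ℤ) + 1 - a := by omega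
        rw [h3]; ring
      have h4 : ∑ p ∈ Finset.Nat.antidiagonalTuple k b,
          ∏ l : Fin k,
            C0 ((l : ℤ) + 1 + (c : ℤ) - (a : ℤ) - ∑ i ∈ Finset.Iio l, (p i : ℤ)) (p l)
          = (genPoly k (c + 1 - a)).coeff b := by
        rw [← ih (c + 1 - a) b]
        apply Finset.sum_congr rfl
        intro p _
        apply Finset.prod_congr rfl
        intro l _
        rw [harith l]
      rw [h4, C0_natCast]
    · have h0 : C0 (c : ℤ) a = 0 := by
        rw [C0_natCast]
        exact Nat.choose_eq_zero_of_lt (by omega)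
      rw [h0, Nat.choose_eq_zero_of_lt (by omega : c < a)]
      simp

lemma prod_coeff_factorial (m : ℕ) :
    (∏ j ∈ Finset.range m, (1 + ((j : Polynomial ℕ) + 1) * X)).coeff m = m.factorial := by
  have hdeg : ∀ m : ℕ,
      (∏ j ∈ Finset.range m, (1 + ((j : Polynomial ℕ) + 1) * X)).natDegree ≤ m := by
    intro m
    refine le_trans (Polynomial.natDegree_prod_le _ _) ?_
    have hb : ∀ j ∈ Finset.range m,
        (1 + ((j : Polynomial ℕ) + 1) * X).natDegree ≤ 1 := by
      intro j _
      refine le_trans (Polynomial.natDegree_add_le _ _) ?_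
      simp only [Polynomial.natDegree_one, max_le_iff]
      refine ⟨by omega, ?_⟩
      refine le_trans Polynomial.natDegree_mul_le ?_
      have h1 : ((j : Polynomial ℕ) + 1).natDegree = 0 := by
        rw [show ((j : Polynomial ℕ) + 1) = ((j + 1 : ℕ) : Polynomial ℕ) by push_cast; ring]
        exact Polynomial.natDegree_natCast _
      rw [h1, zero_add]
      exact Polynomial.natDegree_X_le
    exact le_trans (Finset.sum_le_sum hb) (by simp)
  induction m with
  | zero => simp
  | succ m ih =>
    rw [Finset.prod_range_succ, mul_add, mul_one, Polynomial.coeff_add]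
    have h1 : (∏ j ∈ Finset.range m, (1 + ((j : Polynomial ℕ) + 1) * X)).coeff (m + 1) = 0 :=
      Polynomial.coeff_eq_zero_of_natDegree_lt (lt_of_le_of_lt (hdeg m) (by omega))
    have h2 : (∏ j ∈ Finset.range m, (1 + ((j : Polynomial ℕ) + 1) * X)) *
        (((m : Polynomial ℕ) + 1) * X)
        = C (m + 1) * (∏ j ∈ Finset.range m, (1 + ((j : Polynomial ℕ) + 1) * X)) * X := by
      have hC : (C (m + 1) : Polynomial ℕ) = (((m + 1 : ℕ)) : Polynomial ℕ) := by simp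
      rw [hC]
      push_cast
      ring
    rw [h1, zero_add, h2, Polynomial.coeff_mul_X, Polynomial.coeff_C_mul, ih,
      Nat.factorial_succ]

/-- For every natural `m`, summing over weak compositions of `m`
into `m+1` parts: `∑_{(q₁,…,q_{m+1}) ∈ W_{m+1}^m} ∏_{l=1}^{m+1} C₀(l-1-∑_{i<l} qᵢ, q_l) = m!`. -/
theorem sum_weak_comp_binomial_eq_factorial (m : ℕ) :
    ∑ q ∈ Finset.Nat.antidiagonalTuple (m + 1) m,
      ∏ l : Fin (m + 1), C0 ((l : ℤ) - ∑ i ∈ Finset.Iio l, (q i : ℤ)) (q l)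
      = m.factorial := by
  have h := sum_eq_genPoly_coeff (m + 1) 0 m
  simp only [Nat.cast_zero, add_zero] at h
  rw [h, genPoly, pow_zero, one_mul, Finset.prod_range_succ']
  have h0 : (1 + ((0 : ℕ) : Polynomial ℕ) * X) = 1 := by simp
  rw [h0, mul_one]
  have hcast : ∀ j : ℕ, (1 + ((j + 1 : ℕ) : Polynomial ℕ) * X)
      = 1 + ((j : Polynomial ℕ) + 1) * X := by
    intro j; push_cast; ring
  rw [Finset.prod_congr rfl fun j _ => hcast j]
  exact prod_coeff_factorial m
end

section
/- For every natural number m, ∑_{(q_1,…,q_m) ∈ W_m^m} ∏_{l=1}^{m} C₀(l−∑_{i=1}^{l−1} q_i, q_l) = m!. -/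
open Polynomial Finset

lemma Iio_succ_fin (m : ℕ) (l : Fin m) :
    Finset.Iio (l.succ) = insert 0 ((Finset.Iio l).map (Fin.succEmb m)) := by
  ext i
  induction i using Fin.cases with
  | zero => simp [Fin.succ_pos]
  | succ j => simp [Fin.succ_lt_succ_iff, (Fin.succ_ne_zero j).symm, Fin.succ_ne_zero,
      Fin.succ_inj]

lemma sum_cons_Iio (m : ℕ) (a : ℕ) (r : Fin m → ℕ) (l : Fin m) :
    ∑ i ∈ Finset.Iio l.succ, ((Fin.cons a r : Fin (m+1) → ℕ) i : ℤ)
      = (a : ℤ) + ∑ i ∈ Finset.Iio l, (r i : ℤ) := by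
  rw [Iio_succ_fin, Finset.sum_insert (by simp [Fin.succ_ne_zero, eq_comm]), Finset.sum_map]
  simp

lemma sum_tuple_succ {M : Type*} [AddCommMonoid M] (m n : ℕ) (f : (Fin (m+1) → ℕ) → M) :
    ∑ q ∈ Finset.Nat.antidiagonalTuple (m+1) n, f q
      = ∑ p ∈ Finset.HasAntidiagonal.antidiagonal n, ∑ r ∈ Finset.Nat.antidiagonalTuple m p.2, f (Fin.cons p.1 r) := by
  have h2 : ∑ x ∈ (Finset.HasAntidiagonal.antidiagonal n).sigma (fun p => Finset.Nat.antidiagonalTuple m p.2),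
      f (Fin.cons x.1.1 x.2) = ∑ p ∈ Finset.HasAntidiagonal.antidiagonal n,
      ∑ r ∈ Finset.Nat.antidiagonalTuple m p.2, f (Fin.cons p.1 r) :=
    Finset.sum_sigma _ _ _
  rw [← h2]
  refine Finset.sum_nbij' (fun q => ⟨(q 0, n - q 0), Fin.tail q⟩) (fun x => Fin.cons x.1.1 x.2)
    ?_ ?_ ?_ ?_ ?_
  · intro q hq
    rw [Finset.Nat.mem_antidiagonalTuple] at hq
    have h0 : q 0 ≤ n := by
      rw [← hq]
      exact Finset.single_le_sum (f := fun i => q i) (fun _ _ => Nat.zero_le _) (Finset.mem_univ 0)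
    have ht : ∑ i, Fin.tail q i = n - q 0 := by
      simp only [Fin.tail]
      rw [Fin.sum_univ_succ] at hq
      omega
    rw [Finset.mem_sigma, Finset.HasAntidiagonal.mem_antidiagonal]
    refine ⟨?_, ?_⟩
    · simp only
      omega
    · rw [Finset.Nat.mem_antidiagonalTuple]
      exact ht
  · intro x hx
    rw [Finset.mem_sigma, Finset.HasAntidiagonal.mem_antidiagonal] at hx
    rw [Finset.Nat.mem_antidiagonalTuple]
    rw [Fin.sum_univ_succ]
    simp only [Fin.cons_zero, Fin.cons_succ]
    rw [show ∑ i : Fin m, x.2 i = x.1.2 from Finset.Nat.mem_antidiagonalTuple.mp hx.2]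
    exact hx.1
  · intro q hq
    exact Fin.cons_self_tail q
  · intro x hx
    rw [Finset.mem_sigma, Finset.HasAntidiagonal.mem_antidiagonal] at hx
    obtain ⟨⟨a, b⟩, r⟩ := x
    obtain ⟨h1, -⟩ := hx
    simp only [Finset.HasAntidiagonal.mem_antidiagonal] at h1
    have hb : n - a = b := by omega
    simp [Fin.tail_cons, hb]
  · intro q hq
    exact congrArg f (Fin.cons_self_tail q).symm

noncomputable def Pp (m c : ℕ) : Polynomial ℕ :=
  (1 + Polynomial.C m * Polynomial.X) ^ c *
    ∏ j ∈ Finset.range m, (1 + Polynomial.C (j + 1) * Polynomial.X)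

lemma Pstep (m c : ℕ) :
    Pp (m+1) c = ∑ q ∈ Finset.range (c+2),
      Pp m (c+1-q) * Polynomial.X ^ q * Polynomial.C ((c+1).choose q) := by
  unfold Pp
  rw [Finset.prod_range_succ]
  have h1 : (1 + Polynomial.C (m+1) * Polynomial.X : Polynomial ℕ)
      = Polynomial.X + (1 + Polynomial.C m * Polynomial.X) := by
    rw [map_add, Polynomial.C_1]
    ring
  have h2 : ((1 + Polynomial.C (m+1) * Polynomial.X : Polynomial ℕ)) ^ (c+1)
      = ∑ q ∈ Finset.range (c+2),
        Polynomial.X ^ q * (1 + Polynomial.C m * Polynomial.X) ^ (c+1-q)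
          * Polynomial.C ((c+1).choose q) := by
    rw [h1, add_pow]
    refine Finset.sum_congr rfl fun q hq => ?_
    have hC : (Polynomial.C ((c+1).choose q) : Polynomial ℕ) = (((c+1).choose q : ℕ) : Polynomial ℕ) := by
      simp
    rw [hC]
  calc (1 + Polynomial.C (m+1) * Polynomial.X) ^ c *
        ((∏ j ∈ Finset.range m, (1 + Polynomial.C (j + 1) * Polynomial.X)) *
          (1 + Polynomial.C (m+1) * Polynomial.X))
      = (1 + Polynomial.C (m+1) * Polynomial.X) ^ (c+1) *
        ∏ j ∈ Finset.range m, (1 + Polynomial.C (j + 1) * Polynomial.X) := by ring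
    _ = _ := by
        rw [h2, Finset.sum_mul]
        refine Finset.sum_congr rfl fun q hq => ?_
        ring

lemma coeff_step (m c k : ℕ) :
    (Pp (m+1) c).coeff k
      = ∑ q ∈ Finset.range (k+1), (c+1).choose q * (Pp m (c+1-q)).coeff (k-q) := by
  rw [Pstep, Polynomial.finset_sum_coeff]
  simp only [Polynomial.coeff_mul_C, Polynomial.coeff_mul_X_pow']
  have hL : ∑ q ∈ Finset.range (c+2),
        (if q ≤ k then (Pp m (c+1-q)).coeff (k-q) else 0) * (c+1).choose q
      = ∑ q ∈ Finset.range (k+c+2),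
        (if q ≤ k then (Pp m (c+1-q)).coeff (k-q) else 0) * (c+1).choose q := by
    refine Finset.sum_subset (Finset.range_subset_range.mpr (by omega)) fun x hx hnx => ?_
    have : c+1 < x := by
      simp only [Finset.mem_range] at hnx
      omega
    rw [Nat.choose_eq_zero_of_lt this, mul_zero]
  have hR : ∑ q ∈ Finset.range (k+1), (c+1).choose q * (Pp m (c+1-q)).coeff (k-q)
      = ∑ q ∈ Finset.range (k+c+2),
        (if q ≤ k then (Pp m (c+1-q)).coeff (k-q) else 0) * (c+1).choose q := by
    rw [← Finset.sum_subset (Finset.range_subset_range.mpr (by omega) :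
        Finset.range (k+1) ⊆ Finset.range (k+c+2))
        (fun x hx hnx => by
          simp only [Finset.mem_range] at hnx
          rw [if_neg (by omega), zero_mul])]
    refine Finset.sum_congr rfl fun q hq => ?_
    simp only [Finset.mem_range] at hq
    rw [if_pos (by omega), mul_comm]
  rw [hL, hR]

lemma coeff_prod_top (n : ℕ) :
    (∏ j ∈ Finset.range n, (1 + Polynomial.C (j + 1) * Polynomial.X : Polynomial ℕ)).coeff n
      = n.factorial
    ∧ ∀ k, n < k →
      (∏ j ∈ Finset.range n, (1 + Polynomial.C (j + 1) * Polynomial.X : Polynomial ℕ)).coeff k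
        = 0 := by
  induction n with
  | zero =>
    constructor
    · simp
    · intro k hk
      rcases k with _ | k
      · omega
      · simp [Polynomial.coeff_one]
  | succ n ih =>
    have hexp : ∏ j ∈ Finset.range (n+1), (1 + Polynomial.C (j + 1) * Polynomial.X : Polynomial ℕ)
        = (∏ j ∈ Finset.range n, (1 + Polynomial.C (j + 1) * Polynomial.X))
          + Polynomial.C (n+1) *
            ((∏ j ∈ Finset.range n, (1 + Polynomial.C (j + 1) * Polynomial.X)) * Polynomial.X) := by
      rw [Finset.prod_range_succ]
      ring
    constructor
    · rw [hexp, Polynomial.coeff_add, Polynomial.coeff_C_mul, Polynomial.coeff_mul_X,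
        ih.2 (n+1) (by omega), ih.1, zero_add, Nat.factorial_succ]
    · intro k hk
      rcases k with _ | k
      · omega
      rw [hexp, Polynomial.coeff_add, Polynomial.coeff_C_mul, Polynomial.coeff_mul_X,
        ih.2 (k+1) (by omega), ih.2 k (by omega), mul_zero, add_zero]

lemma C0_natCast_s3 (n b : ℕ) : C0 (n : ℤ) b = n.choose b := by
  simp [C0]

lemma Iio_zero_fin (m : ℕ) : Finset.Iio (0 : Fin (m+1)) = ∅ := by
  ext i
  simp

lemma key (m : ℕ) : ∀ c k : ℕ,
    ∑ q ∈ Finset.Nat.antidiagonalTuple m k,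
      ∏ l : Fin m, C0 ((l : ℤ) + 1 + (c : ℤ) - ∑ i ∈ Finset.Iio l, (q i : ℤ)) (q l)
      = (Pp m c).coeff k := by
  induction m with
  | zero =>
    intro c k
    rcases k with _ | k
    · rw [Finset.Nat.antidiagonalTuple_zero_zero]
      simp [Pp]
    · rw [Finset.Nat.antidiagonalTuple_zero_succ]
      simp [Pp, Polynomial.coeff_one]
  | succ m ih =>
    intro c k
    rw [sum_tuple_succ, coeff_step]
    rw [Finset.Nat.sum_antidiagonal_eq_sum_range_succ_mk]
    refine Finset.sum_congr rfl fun p hp => ?_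
    simp only
    by_cases hp1 : p ≤ c + 1
    · have hcast : ((c + 1 - p : ℕ) : ℤ) = 1 + (c : ℤ) - (p : ℤ) := by omega
      have hterm : ∀ r : Fin m → ℕ,
          (∏ l : Fin (m+1), C0 ((l : ℤ) + 1 + (c : ℤ)
              - ∑ i ∈ Finset.Iio l, ((Fin.cons p r : Fin (m+1) → ℕ) i : ℤ))
            ((Fin.cons p r : Fin (m+1) → ℕ) l))
          = (c+1).choose p *
            ∏ l : Fin m, C0 ((l : ℤ) + 1 + ((c + 1 - p : ℕ) : ℤ)
              - ∑ i ∈ Finset.Iio l, (r i : ℤ)) (r l) := by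
        intro r
        rw [Fin.prod_univ_succ]
        congr 1
        · rw [Fin.cons_zero, Iio_zero_fin, Finset.sum_empty]
          rw [show ((0 : Fin (m+1)) : ℤ) + 1 + (c : ℤ) - 0 = ((c + 1 : ℕ) : ℤ) by push_cast [Fin.val_zero]; ring]
          rw [C0_natCast_s3]
        · refine Finset.prod_congr rfl fun l _ => ?_
          rw [Fin.cons_succ, sum_cons_Iio]
          congr 1
          rw [hcast]
          have : ((l.succ : Fin (m+1)) : ℤ) = (l : ℤ) + 1 := by
            push_cast [Fin.val_succ]
            ring
          rw [this]
          ring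
      calc ∑ r ∈ Finset.Nat.antidiagonalTuple m (k - p),
            ∏ l : Fin (m+1), C0 ((l : ℤ) + 1 + (c : ℤ)
              - ∑ i ∈ Finset.Iio l, ((Fin.cons p r : Fin (m+1) → ℕ) i : ℤ))
              ((Fin.cons p r : Fin (m+1) → ℕ) l)
          = ∑ r ∈ Finset.Nat.antidiagonalTuple m (k - p),
            (c+1).choose p *
              ∏ l : Fin m, C0 ((l : ℤ) + 1 + ((c + 1 - p : ℕ) : ℤ)
                - ∑ i ∈ Finset.Iio l, (r i : ℤ)) (r l) :=
            Finset.sum_congr rfl fun r _ => hterm r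
        _ = (c+1).choose p * (Pp m (c + 1 - p)).coeff (k - p) := by
            rw [← Finset.mul_sum, ih (c + 1 - p) (k - p)]
    · have hch : (c+1).choose p = 0 := Nat.choose_eq_zero_of_lt (by omega)
      rw [hch, zero_mul]
      refine Finset.sum_eq_zero fun r _ => ?_
      rw [Fin.prod_univ_succ]
      have h0 : C0 (((0 : Fin (m+1)) : ℤ) + 1 + (c : ℤ)
          - ∑ i ∈ Finset.Iio (0 : Fin (m+1)), ((Fin.cons p r : Fin (m+1) → ℕ) i : ℤ))
          ((Fin.cons p r : Fin (m+1) → ℕ) 0) = 0 := by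
        rw [Fin.cons_zero, Iio_zero_fin, Finset.sum_empty]
        rw [show ((0 : Fin (m+1)) : ℤ) + 1 + (c : ℤ) - 0 = ((c + 1 : ℕ) : ℤ) by
          push_cast [Fin.val_zero]; ring]
        rw [C0_natCast_s3]
        exact hch
      rw [h0, zero_mul]

/-- For every natural `m`, summing over weak compositions of `m`
into `m` parts: `∑_{(q₁,…,q_m) ∈ W_m^m} ∏_{l=1}^{m} C₀(l-∑_{i<l} qᵢ, q_l) = m!`. -/
theorem sum_weak_comp_binomial_eq_factorial' (m : ℕ) :
    ∑ q ∈ Finset.Nat.antidiagonalTuple m m,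
      ∏ l : Fin m, C0 ((l : ℤ) + 1 - ∑ i ∈ Finset.Iio l, (q i : ℤ)) (q l)
      = m.factorial := by
  have h := key m 0 m
  have hP : (Pp m 0).coeff m = m.factorial := by
    unfold Pp
    rw [pow_zero, one_mul]
    exact (coeff_prod_top m).1
  rw [← hP, ← h]
  refine Finset.sum_congr rfl fun q _ => Finset.prod_congr rfl fun l _ => ?_
  congr 1
end

section
/- Let n ≥ 1 be a natural number, let Γ, τ₀ be nonnegative reals, and let μ : ℕ → ℝ be a sequence of nonnegative reals with μ_0 = 1 and μ_i ≤ i!·τ₀^i for all integers 1 ≤ i ≤ n. Then ε_n ≤ Γ^{n+1}·τ₀^n·n!·C(2n−1, n), where C(·,·) is the usual binomial coefficient. -/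
/-- `ε_n := Γ ∑_{(q₁,…,q_n) ∈ W_n^n} ∏_{i=1}^n (Γ μ_{qᵢ})`, summing over weak
compositions of `n` into `n` parts (so `ε_0 = Γ`). -/
noncomputable def eps (Γ : ℝ) (μ : ℕ → ℝ) (n : ℕ) : ℝ :=
  Γ * ∑ q ∈ Finset.Nat.antidiagonalTuple n n, ∏ i : Fin n, (Γ * μ (q i))

/-- The equiv between weak compositions of `n` into `k` parts and multisets of
cardinality `n` over `Fin k`. -/
def antidiagonalTupleEquivSym (k n : ℕ) :
    (Finset.Nat.antidiagonalTuple k n : Finset (Fin k → ℕ)) ≃ Sym (Fin k) n where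
  toFun q := ⟨∑ j : Fin k, Multiset.replicate (q.1 j) j, by
    have h := Finset.Nat.mem_antidiagonalTuple.mp q.2
    simp [Multiset.card_replicate, h]⟩
  invFun m := ⟨fun j => Multiset.count j m.1, by
    refine Finset.Nat.mem_antidiagonalTuple.mpr ?_
    rw [Multiset.sum_count_eq_card (fun a _ => Finset.mem_univ a), m.2]⟩
  left_inv := by
    rintro ⟨q, hq⟩
    ext j
    simp [Multiset.count_sum', Multiset.count_replicate]
  right_inv := by
    rintro ⟨m, hm⟩
    ext1
    simp only
    have : ∑ j : Fin k, Multiset.replicate (Multiset.count j m) j = m := by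
      rw [← Finset.sum_subset (Finset.subset_univ m.toFinset)]
      · simpa [Multiset.nsmul_singleton] using Multiset.toFinset_sum_count_nsmul_eq m
      · intro x _ hx
        simp [Multiset.count_eq_zero_of_notMem (fun h => hx (Multiset.mem_toFinset.mpr h))]
    exact this

lemma card_antidiagonalTuple (k n : ℕ) :
    (Finset.Nat.antidiagonalTuple k n).card = (k + n - 1).choose n := by
  have h1 : Fintype.card (Finset.Nat.antidiagonalTuple k n : Finset (Fin k → ℕ))
      = Fintype.card (Sym (Fin k) n) := Fintype.card_congr (antidiagonalTupleEquivSym k n)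
  rw [Fintype.card_coe] at h1
  rw [h1, Sym.card_sym_eq_choose, Fintype.card_fin]

/-- If `n ≥ 1`, `Γ, τ₀ ≥ 0`, `μ` is nonnegative with `μ 0 = 1` and
`μ i ≤ i! τ₀^i` for `1 ≤ i ≤ n`, then `ε_n ≤ Γ^{n+1} τ₀^n n! C(2n-1, n)`. -/
theorem eps_le_binom (n : ℕ) (hn : 1 ≤ n) (Γ τ₀ : ℝ) (hΓ : 0 ≤ Γ) (hτ : 0 ≤ τ₀)
    (μ : ℕ → ℝ) (hμ0 : μ 0 = 1) (hμnonneg : ∀ i, 0 ≤ μ i)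
    (hμ : ∀ i, 1 ≤ i → i ≤ n → μ i ≤ i.factorial * τ₀ ^ i) :
    eps Γ μ n ≤ Γ ^ (n + 1) * τ₀ ^ n * n.factorial * ((2 * n - 1).choose n) := by
  rw [eps]
  have key : ∀ q ∈ Finset.Nat.antidiagonalTuple n n,
      ∏ i : Fin n, (Γ * μ (q i)) ≤ Γ ^ n * τ₀ ^ n * n.factorial := by
    intro q hq
    have hsum : ∑ i : Fin n, q i = n := Finset.Nat.mem_antidiagonalTuple.mp hq
    have hle : ∀ i : Fin n, q i ≤ n := fun i => hsum ▸ Finset.single_le_sum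
      (fun _ _ => Nat.zero_le _) (Finset.mem_univ i)
    have step1 : ∏ i : Fin n, (Γ * μ (q i))
        ≤ ∏ i : Fin n, (Γ * ((q i).factorial * τ₀ ^ (q i))) := by
      apply Finset.prod_le_prod
      · intro i _; exact mul_nonneg hΓ (hμnonneg _)
      · intro i _
        apply mul_le_mul_of_nonneg_left _ hΓ
        rcases Nat.eq_zero_or_pos (q i) with h0 | h1
        · simp [h0, hμ0]
        · exact hμ _ h1 (hle i)
    refine step1.trans ?_
    rw [Finset.prod_mul_distrib, Finset.prod_const, Finset.prod_mul_distrib,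
      Finset.prod_pow_eq_pow_sum, hsum]
    rw [Finset.card_univ, Fintype.card_fin]
    have hfac : (∏ i : Fin n, ((q i).factorial : ℝ)) ≤ (n.factorial : ℝ) := by
      rw [← Nat.cast_prod]
      have := Nat.prod_factorial_dvd_factorial_sum (Finset.univ) q
      rw [hsum] at this
      exact_mod_cast Nat.le_of_dvd n.factorial_pos this
    calc Γ ^ n * ((∏ i : Fin n, ((q i).factorial : ℝ)) * τ₀ ^ n)
        ≤ Γ ^ n * ((n.factorial : ℝ) * τ₀ ^ n) := by
          apply mul_le_mul_of_nonneg_left _ (pow_nonneg hΓ n)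
          exact mul_le_mul_of_nonneg_right hfac (pow_nonneg hτ n)
      _ = Γ ^ n * τ₀ ^ n * n.factorial := by ring
  have hsum_le : ∑ q ∈ Finset.Nat.antidiagonalTuple n n, ∏ i : Fin n, (Γ * μ (q i))
      ≤ (Finset.Nat.antidiagonalTuple n n).card * (Γ ^ n * τ₀ ^ n * n.factorial) := by
    simpa using Finset.sum_le_card_nsmul _ _ _ key
  have hcard : (Finset.Nat.antidiagonalTuple n n).card = (2 * n - 1).choose n := by
    rw [card_antidiagonalTuple]; congr 1; omega
  calc Γ * ∑ q ∈ Finset.Nat.antidiagonalTuple n n, ∏ i : Fin n, (Γ * μ (q i))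
      ≤ Γ * ((Finset.Nat.antidiagonalTuple n n).card * (Γ ^ n * τ₀ ^ n * n.factorial)) :=
        mul_le_mul_of_nonneg_left hsum_le hΓ
    _ = Γ ^ (n + 1) * τ₀ ^ n * n.factorial * ((2 * n - 1).choose n) := by
        rw [hcard]; ring
end

section
/- Let n be a natural number, let Γ, τ₀ be nonnegative reals, and let μ : ℕ → ℝ be a sequence of nonnegative reals with μ_0 = 1 and μ_i ≤ i!·τ₀^i for all integers 1 ≤ i ≤ n. Then ε_n ≤ Γ·(4Γτ₀)^n·n!. -/
lemma two_pow_sum_lt (m : ℕ) : ∑ j ∈ Finset.range m, 2 ^ j < 2 ^ m := by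
  induction m with
  | zero => simp
  | succ m ih =>
    rw [Finset.sum_range_succ, pow_succ]
    omega

lemma adt_len : ∀ (k n : ℕ), (List.Nat.antidiagonalTuple k n).length ≤ 2 ^ (k + n) := by
  intro k
  induction k with
  | zero =>
    intro n
    cases n <;> simp [Nat.one_le_two_pow]
  | succ k ih =>
    intro n
    have h : (List.Nat.antidiagonalTuple (k+1) n).length =
        ((List.range (n+1)).map (fun i => (List.Nat.antidiagonalTuple k (n - i)).length)).sum := by
      rw [List.Nat.antidiagonalTuple, List.length_flatMap, List.Nat.antidiagonal, List.map_map]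
      congr 1; ext i; simp
    rw [h]
    have h2 : ((List.range (n+1)).map (fun i => (List.Nat.antidiagonalTuple k (n - i)).length)).sum
        = ∑ i ∈ Finset.range (n+1), (List.Nat.antidiagonalTuple k (n - i)).length := rfl
    rw [h2]
    calc ∑ i ∈ Finset.range (n+1), (List.Nat.antidiagonalTuple k (n - i)).length
        ≤ ∑ i ∈ Finset.range (n+1), 2 ^ (k + (n - i)) :=
          Finset.sum_le_sum fun i _ => ih _
      _ = ∑ i ∈ Finset.range (n+1), 2 ^ (k + i) := by
          simpa using Finset.sum_range_reflect (fun i => 2 ^ (k + i)) (n+1)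
      _ = 2 ^ k * ∑ i ∈ Finset.range (n+1), 2 ^ i := by
          rw [Finset.mul_sum]
          exact Finset.sum_congr rfl fun i _ => pow_add 2 k i
      _ ≤ 2 ^ k * 2 ^ (n+1) := Nat.mul_le_mul_left _ (two_pow_sum_lt (n+1)).le
      _ = 2 ^ (k + 1 + n) := by ring

lemma adt_card (k n : ℕ) : (Finset.Nat.antidiagonalTuple k n).card ≤ 2 ^ (k + n) :=
  adt_len k n

/-- If `Γ, τ₀ ≥ 0`, `μ` is nonnegative with `μ 0 = 1` and
`μ i ≤ i! τ₀^i` for `1 ≤ i ≤ n`, then `ε_n ≤ Γ (4Γτ₀)^n n!`. -/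
theorem eps_le (n : ℕ) (Γ τ₀ : ℝ) (hΓ : 0 ≤ Γ) (hτ : 0 ≤ τ₀)
    (μ : ℕ → ℝ) (hμ0 : μ 0 = 1) (hμnonneg : ∀ i, 0 ≤ μ i)
    (hμ : ∀ i, 1 ≤ i → i ≤ n → μ i ≤ i.factorial * τ₀ ^ i) :
    eps Γ μ n ≤ Γ * (4 * Γ * τ₀) ^ n * n.factorial := by
  have hcard : (Finset.Nat.antidiagonalTuple n n).card ≤ 2 ^ (n + n) := adt_card n n
  have key : ∀ q ∈ Finset.Nat.antidiagonalTuple n n,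
      ∏ i : Fin n, (Γ * μ (q i)) ≤ Γ ^ n * τ₀ ^ n * n.factorial := by
    intro q hq
    rw [Finset.Nat.mem_antidiagonalTuple] at hq
    have hqle : ∀ i : Fin n, q i ≤ n := fun i => hq ▸ Finset.single_le_sum
      (fun j _ => Nat.zero_le _) (Finset.mem_univ i)
    have hstep : ∀ i : Fin n, μ (q i) ≤ (q i).factorial * τ₀ ^ (q i) := by
      intro i
      rcases Nat.eq_zero_or_pos (q i) with h | h
      · rw [h, hμ0]; simp
      · exact hμ _ h (hqle i)
    calc ∏ i : Fin n, (Γ * μ (q i))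
        ≤ ∏ i : Fin n, (Γ * ((q i).factorial * τ₀ ^ (q i))) := by
          refine Finset.prod_le_prod (fun i _ => mul_nonneg hΓ (hμnonneg _)) fun i _ =>
            mul_le_mul_of_nonneg_left (hstep i) hΓ
      _ = Γ ^ n * ((∏ i : Fin n, ((q i).factorial : ℝ)) * τ₀ ^ n) := by
          rw [Finset.prod_mul_distrib, Finset.prod_mul_distrib, Finset.prod_const,
            Finset.prod_pow_eq_pow_sum]
          · rw [Finset.card_univ, Fintype.card_fin]
            rw [hq]
      _ ≤ Γ ^ n * ((n.factorial : ℝ) * τ₀ ^ n) := by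
          have hd : (∏ i : Fin n, (q i).factorial) ≤ n.factorial := by
            have := Nat.prod_factorial_dvd_factorial_sum Finset.univ q
            rw [hq] at this
            exact Nat.le_of_dvd n.factorial_pos this
          have : ((∏ i : Fin n, (q i).factorial : ℕ) : ℝ) ≤ (n.factorial : ℝ) := by
            exact_mod_cast hd
          push_cast at this
          exact mul_le_mul_of_nonneg_left (mul_le_mul_of_nonneg_right this (pow_nonneg hτ n))
            (pow_nonneg hΓ n)
      _ = Γ ^ n * τ₀ ^ n * n.factorial := by ring
  have hsum : ∑ q ∈ Finset.Nat.antidiagonalTuple n n, ∏ i : Fin n, (Γ * μ (q i))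
      ≤ (Finset.Nat.antidiagonalTuple n n).card * (Γ ^ n * τ₀ ^ n * n.factorial) := by
    simpa using Finset.sum_le_card_nsmul _ _ _ key
  have hpos : (0:ℝ) ≤ Γ ^ n * τ₀ ^ n * n.factorial := by positivity
  have hc : ((Finset.Nat.antidiagonalTuple n n).card : ℝ) ≤ 4 ^ n := by
    calc ((Finset.Nat.antidiagonalTuple n n).card : ℝ) ≤ ((2:ℝ) ^ (n+n)) := by exact_mod_cast hcard
      _ = 4 ^ n := by rw [pow_add, ← mul_pow]; norm_num
  calc eps Γ μ n ≤ Γ * ((Finset.Nat.antidiagonalTuple n n).card * (Γ ^ n * τ₀ ^ n * n.factorial)) :=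
        mul_le_mul_of_nonneg_left hsum hΓ
    _ ≤ Γ * (4 ^ n * (Γ ^ n * τ₀ ^ n * n.factorial)) :=
        mul_le_mul_of_nonneg_left (mul_le_mul_of_nonneg_right hc hpos) hΓ
    _ = Γ * (4 * Γ * τ₀) ^ n * n.factorial := by rw [mul_pow, mul_pow]; ring
end

section
/- Let n and j be natural numbers, let Γ, τ₀ be nonnegative reals, and let μ : ℕ → ℝ be a sequence of nonnegative reals with μ_0 = 1 and μ_i ≤ i!·τ₀^i for all integers 1 ≤ i ≤ j+n−1. Then M_n[j] ≤ Γ·τ₀^j · ∑_{k=0}^{n−1} (j+k)!·(Γτ₀)^k·C(j+2k, j+k), where C(·,·) is the usual binomial coefficient. -/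
lemma length_adt : ∀ (k n : ℕ), (List.Nat.antidiagonalTuple (k+1) n).length = (n + k).choose k
  | 0, n => by simp [List.Nat.antidiagonalTuple_one]
  | (k+1), n => by
    rw [List.Nat.antidiagonalTuple, List.length_flatMap]
    simp only [Function.comp_def, List.length_map]
    have h1 : ((List.Nat.antidiagonal n).map
          fun ni => (List.Nat.antidiagonalTuple (k+1) ni.2).length).sum
        = ((List.Nat.antidiagonal n).map fun ni => (ni.2 + k).choose k).sum := by
      congr 1
      exact List.map_congr_left fun ni _ => length_adt k ni.2
    rw [h1, List.Nat.antidiagonal, List.map_map]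
    have h2 : ((List.range (n+1)).map fun i => ((n - i) + k).choose k).sum
        = ∑ i ∈ Finset.range (n+1), ((n - i) + k).choose k := rfl
    rw [show ((fun ni : ℕ × ℕ => (ni.2 + k).choose k) ∘ fun i => (i, n - i))
        = fun i => ((n - i) + k).choose k from rfl, h2]
    have h3 : ∑ i ∈ Finset.range (n+1), ((n - i) + k).choose k
        = ∑ i ∈ Finset.range (n+1), (i + k).choose k := by
      simpa using Finset.sum_range_reflect (fun j => (j + k).choose k) (n+1)
    rw [h3, Nat.sum_range_add_choose, Nat.add_assoc]

lemma card_adt (k n : ℕ) : (Finset.Nat.antidiagonalTuple (k+1) n).card = (n + k).choose k :=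
  length_adt k n

/-- `M_n[j] := ∑_{k=1}^{n} ∑_{(q₁,…,q_k) ∈ W_k^{j+k-1}} ∏_{i=1}^{k} (Γ μ_{qᵢ})`,
summing over weak compositions of `j+k-1` into `k` parts (so `M_0[j] = 0`). -/
noncomputable def Mker (Γ : ℝ) (μ : ℕ → ℝ) (n j : ℕ) : ℝ :=
  ∑ k ∈ Finset.Icc 1 n, ∑ q ∈ Finset.Nat.antidiagonalTuple k (j + k - 1),
    ∏ i : Fin k, (Γ * μ (q i))

/-- If `Γ, τ₀ ≥ 0`, `μ` is nonnegative with `μ 0 = 1` and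
`μ i ≤ i! τ₀^i` for `1 ≤ i ≤ j+n-1`, then
`M_n[j] ≤ Γ τ₀^j ∑_{k=0}^{n-1} (j+k)! (Γτ₀)^k C(j+2k, j+k)`. -/
theorem Mker_le (n j : ℕ) (Γ τ₀ : ℝ) (hΓ : 0 ≤ Γ) (hτ : 0 ≤ τ₀)
    (μ : ℕ → ℝ) (hμ0 : μ 0 = 1) (hμnonneg : ∀ i, 0 ≤ μ i)
    (hμ : ∀ i, 1 ≤ i → i ≤ j + n - 1 → μ i ≤ i.factorial * τ₀ ^ i) :
    Mker Γ μ n j ≤ Γ * τ₀ ^ j *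
      ∑ k ∈ Finset.range n,
        (j + k).factorial * (Γ * τ₀) ^ k * ((j + 2 * k).choose (j + k)) := by
  have key : ∀ k, k < n →
      (∑ q ∈ Finset.Nat.antidiagonalTuple (1+k) (j + (1+k) - 1), ∏ i : Fin (1+k), Γ * μ (q i))
        ≤ Γ * τ₀ ^ j * ((j+k).factorial * (Γ*τ₀)^k * ((j + 2*k).choose (j+k))) := by
    intro k hk
    rw [show 1 + k = k + 1 from Nat.add_comm 1 k,
      show j + (k+1) - 1 = j + k by omega]
    have hterm : ∀ q ∈ Finset.Nat.antidiagonalTuple (k+1) (j+k),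
        (∏ i : Fin (k+1), Γ * μ (q i))
          ≤ Γ^(k+1) * (((j+k).factorial : ℝ) * τ₀^(j+k)) := by
      intro q hq
      have hsum : ∑ i, q i = j + k := Finset.Nat.mem_antidiagonalTuple.mp hq
      rw [Finset.prod_mul_distrib, Finset.prod_const, Finset.card_univ, Fintype.card_fin]
      have h1 : (∏ i : Fin (k+1), μ (q i))
          ≤ ∏ i : Fin (k+1), (((q i).factorial : ℝ) * τ₀ ^ (q i)) := by
        apply Finset.prod_le_prod (fun i _ => hμnonneg _)
        intro i _
        rcases Nat.eq_zero_or_pos (q i) with h0 | h0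
        · rw [h0]; simp [hμ0]
        · apply hμ _ h0
          have hle : q i ≤ j + k := hsum ▸ Finset.single_le_sum
            (f := fun i => q i) (fun i _ => Nat.zero_le _) (Finset.mem_univ i)
          omega
      have h2 : (∏ i : Fin (k+1), (((q i).factorial : ℝ) * τ₀ ^ (q i)))
          ≤ ((j+k).factorial : ℝ) * τ₀^(j+k) := by
        rw [Finset.prod_mul_distrib, Finset.prod_pow_eq_pow_sum, hsum]
        apply mul_le_mul_of_nonneg_right _ (pow_nonneg hτ _)
        rw [← Nat.cast_prod]
        exact_mod_cast hsum ▸ Nat.le_of_dvd (Nat.factorial_pos _)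
          (Nat.prod_factorial_dvd_factorial_sum _ _)
      calc Γ^(k+1) * ∏ i : Fin (k+1), μ (q i)
          ≤ Γ^(k+1) * ∏ i : Fin (k+1), (((q i).factorial : ℝ) * τ₀ ^ (q i)) :=
            mul_le_mul_of_nonneg_left h1 (pow_nonneg hΓ _)
        _ ≤ Γ^(k+1) * (((j+k).factorial : ℝ) * τ₀^(j+k)) :=
            mul_le_mul_of_nonneg_left h2 (pow_nonneg hΓ _)
    calc (∑ q ∈ Finset.Nat.antidiagonalTuple (k+1) (j+k), ∏ i : Fin (k+1), Γ * μ (q i))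
        ≤ (Finset.Nat.antidiagonalTuple (k+1) (j+k)).card
            • (Γ^(k+1) * (((j+k).factorial : ℝ) * τ₀^(j+k))) :=
          Finset.sum_le_card_nsmul _ _ _ hterm
      _ = (((j+k+k).choose k : ℕ) : ℝ) * (Γ^(k+1) * (((j+k).factorial : ℝ) * τ₀^(j+k))) := by
          rw [card_adt, nsmul_eq_mul]
      _ = Γ * τ₀ ^ j * ((j+k).factorial * (Γ*τ₀)^k * ((j + 2*k).choose (j+k))) := by
          have hch : ((j + 2*k).choose (j+k)) = ((j+k+k).choose k) := by
            rw [show j + k = j + 2*k - k by omega, Nat.choose_symm (by omega)]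
            congr 1; omega
          rw [hch, pow_add, pow_add, mul_pow]
          ring
  rw [Mker, show Finset.Icc 1 n = Finset.Ico 1 (n+1) by rw [Finset.Ico_add_one_right_eq_Icc],
    Finset.sum_Ico_eq_sum_range, Nat.add_sub_cancel, Finset.mul_sum]
  exact Finset.sum_le_sum fun k hk => key k (Finset.mem_range.mp hk)
end

section
/- Let n and j be natural numbers, let Γ ≥ 0 and τ₀ > 0 be reals with 4Γτ₀·(n+j−1) < 1, and let μ : ℕ → ℝ be a sequence of nonnegative reals with μ_0 = 1 and μ_i ≤ i!·τ₀^i for all integers 1 ≤ i ≤ j+n−1. Then M_n[j] ≤ j!·Γ·τ₀^j / (1 − 4(j+n−1)Γτ₀)^{j+1}. -/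
open Finset

private theorem sum_adt_succ (k m : ℕ) (F : (Fin (k+1) → ℕ) → ℝ) :
    ∑ q ∈ Finset.Nat.antidiagonalTuple (k+1) m, F q =
    ∑ ab ∈ Finset.HasAntidiagonal.antidiagonal m, ∑ r ∈ Finset.Nat.antidiagonalTuple k ab.2,
      F (Fin.cons ab.1 r) := by
  rw [Finset.sum_sigma']
  apply Finset.sum_nbij' (i := fun q => (⟨(q 0, ∑ i : Fin k, q i.succ), Fin.tail q⟩ :
      Σ _ab : ℕ × ℕ, Fin k → ℕ)) (j := fun p => Fin.cons p.1.1 p.2)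
  · intro q hq
    rw [Finset.Nat.mem_antidiagonalTuple] at hq
    simp only [Finset.mem_sigma, Finset.HasAntidiagonal.mem_antidiagonal, Finset.Nat.mem_antidiagonalTuple]
    constructor
    · rw [← hq, Fin.sum_univ_succ]
    · rfl
  · intro p hp
    simp only [Finset.mem_sigma, Finset.HasAntidiagonal.mem_antidiagonal,
      Finset.Nat.mem_antidiagonalTuple] at hp
    simp only [Finset.Nat.mem_antidiagonalTuple, Fin.sum_cons, hp.2, hp.1]
  · intro q hq
    simp [Fin.cons_self_tail]
  · intro p hp
    simp only [Finset.mem_sigma, Finset.HasAntidiagonal.mem_antidiagonal,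
      Finset.Nat.mem_antidiagonalTuple] at hp
    ext1
    · simp [Fin.cons_zero, hp.2]
    · simp [Fin.tail_cons]
  · intro q hq
    simp [Fin.cons_self_tail]

private theorem two_pow_le_centralBinom : ∀ a : ℕ, 2 ^ a ≤ Nat.centralBinom a := by
  intro a
  induction a with
  | zero => simp [Nat.centralBinom]
  | succ n ih =>
    have h := Nat.succ_mul_centralBinom_succ n
    have h2 : (n+1) * 2 ^ (n+1) ≤ (n+1) * Nat.centralBinom (n+1) := by
      rw [h]; ring_nf; nlinarith [Nat.centralBinom_pos n]
    exact Nat.le_of_mul_le_mul_left h2 (Nat.succ_pos n)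

private theorem two_pow_min_le_choose (a b : ℕ) : 2 ^ min a b ≤ (a + b).choose a := by
  have hsymm : (a+b).choose a = (a+b).choose b := by
    rw [← Nat.choose_symm (Nat.le_add_right a b)]
    congr 1; omega
  rcases le_total a b with h | h
  · rw [min_eq_left h]
    calc 2 ^ a ≤ Nat.centralBinom a := two_pow_le_centralBinom a
    _ = (a + a).choose a := by rw [Nat.centralBinom, two_mul]
    _ ≤ (a + b).choose a := Nat.choose_le_choose a (by omega)
  · rw [min_eq_right h, hsymm]
    calc 2 ^ b ≤ Nat.centralBinom b := two_pow_le_centralBinom b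
    _ = (b + b).choose b := by rw [Nat.centralBinom, two_mul]
    _ ≤ (a + b).choose b := Nat.choose_le_choose b (by omega)

private theorem fact_mul_fact_le (a b : ℕ) :
    (a.factorial * b.factorial : ℝ) ≤ ((a+b).factorial : ℝ) * (1/2) ^ min a b := by
  have h := Nat.add_choose_mul_factorial_mul_factorial a b
  have h2 : 2 ^ min a b * (a.factorial * b.factorial) ≤ (a+b).factorial := by
    calc 2 ^ min a b * (a.factorial * b.factorial)
        ≤ (a+b).choose a * (a.factorial * b.factorial) :=
          Nat.mul_le_mul_right _ (two_pow_min_le_choose a b)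
    _ = (a+b).factorial := by
          rw [← h]
          have hsymm : (a+b).choose a = (a+b).choose b := by
            rw [← Nat.choose_symm (Nat.le_add_right a b)]; congr 1; omega
          rw [hsymm]; ring
  have h3 := (Nat.cast_le (α := ℝ)).2 h2
  push_cast at h3
  rw [div_pow, one_pow, mul_one_div, le_div_iff₀ (by positivity)]
  linarith [h3]

private theorem sum_fact_antidiag_le (m : ℕ) :
    ∑ ab ∈ Finset.HasAntidiagonal.antidiagonal m, (ab.1.factorial * ab.2.factorial : ℝ) ≤
      4 * m.factorial := by
  have hgeom : ∀ N : ℕ, ∑ i ∈ Finset.range N, ((1:ℝ)/2) ^ i ≤ 2 := by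
    intro N
    rw [geom_sum_eq (by norm_num)]
    have h0 : (0:ℝ) ≤ (1/2) ^ N := by positivity
    rw [div_le_iff_of_neg (by norm_num)]
    linarith
  calc ∑ ab ∈ Finset.HasAntidiagonal.antidiagonal m, (ab.1.factorial * ab.2.factorial : ℝ)
      ≤ ∑ ab ∈ Finset.HasAntidiagonal.antidiagonal m,
          (m.factorial : ℝ) * ((1/2) ^ ab.1 + (1/2) ^ ab.2) := by
        apply Finset.sum_le_sum
        intro ab hab
        rw [Finset.HasAntidiagonal.mem_antidiagonal] at hab
        calc (ab.1.factorial * ab.2.factorial : ℝ)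
            ≤ ((ab.1+ab.2).factorial : ℝ) * (1/2) ^ min ab.1 ab.2 :=
              fact_mul_fact_le ab.1 ab.2
        _ ≤ (m.factorial : ℝ) * ((1/2) ^ ab.1 + (1/2) ^ ab.2) := by
            rw [hab]
            apply mul_le_mul_of_nonneg_left _ (by positivity)
            rcases min_choice ab.1 ab.2 with h | h <;> rw [h] <;>
              [(nlinarith [pow_nonneg (by norm_num : (0:ℝ) ≤ 1/2) ab.2]);
               (nlinarith [pow_nonneg (by norm_num : (0:ℝ) ≤ 1/2) ab.1])]
  _ = (m.factorial : ℝ) * (∑ ab ∈ Finset.HasAntidiagonal.antidiagonal m, ((1/2:ℝ) ^ ab.1)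
        + ∑ ab ∈ Finset.HasAntidiagonal.antidiagonal m, ((1/2:ℝ) ^ ab.2)) := by
      simp only [mul_add, ← Finset.mul_sum, Finset.sum_add_distrib]
  _ ≤ (m.factorial : ℝ) * (2 + 2) := by
      apply mul_le_mul_of_nonneg_left _ (by positivity)
      have e1 : ∑ ab ∈ Finset.HasAntidiagonal.antidiagonal m, ((1/2:ℝ) ^ ab.1)
          = ∑ i ∈ Finset.range (m+1), ((1/2:ℝ)) ^ i := by
        rw [Finset.Nat.sum_antidiagonal_eq_sum_range_succ_mk]
      have e2 : ∑ ab ∈ Finset.HasAntidiagonal.antidiagonal m, ((1/2:ℝ) ^ ab.2)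
          = ∑ i ∈ Finset.range (m+1), ((1/2:ℝ)) ^ (m - i) := by
        rw [Finset.Nat.sum_antidiagonal_eq_sum_range_succ_mk]
      have e3 : ∑ i ∈ Finset.range (m+1), ((1/2:ℝ)) ^ (m - i)
          = ∑ i ∈ Finset.range (m+1), ((1/2:ℝ)) ^ i := by
        rw [← Finset.sum_range_reflect]
        apply Finset.sum_congr rfl
        intro i hi
        rw [Finset.mem_range] at hi
        congr 1; omega
      rw [e1, e2, e3]
      linarith [hgeom (m+1)]
  _ = 4 * m.factorial := by ring

private theorem sum_prod_fact_le (s : ℕ) : ∀ m : ℕ,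
    ∑ q ∈ Finset.Nat.antidiagonalTuple (s+1) m, ∏ i, ((q i).factorial : ℝ)
      ≤ 4 ^ s * m.factorial := by
  induction s with
  | zero =>
    intro m
    rw [Finset.Nat.antidiagonalTuple_one, Finset.sum_singleton]
    simp
  | succ s ih =>
    intro m
    rw [sum_adt_succ (s+1) m (fun q => ∏ i, ((q i).factorial : ℝ))]
    have hstep : ∀ ab : ℕ × ℕ,
        ∑ r ∈ Finset.Nat.antidiagonalTuple (s+1) ab.2,
          ∏ i : Fin (s+2), (((Fin.cons ab.1 r : Fin (s+2) → ℕ) i).factorial : ℝ)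
        ≤ (ab.1.factorial : ℝ) * (4 ^ s * ab.2.factorial) := by
      intro ab
      have : ∀ r : Fin (s+1) → ℕ,
          ∏ i : Fin (s+2), (((Fin.cons ab.1 r : Fin (s+2) → ℕ) i).factorial : ℝ)
          = (ab.1.factorial : ℝ) * ∏ i, ((r i).factorial : ℝ) := by
        intro r
        rw [Fin.prod_univ_succ]
        simp [Fin.cons_zero, Fin.cons_succ]
      simp_rw [this]
      rw [← Finset.mul_sum]
      apply mul_le_mul_of_nonneg_left (ih ab.2) (by positivity)
    calc ∑ ab ∈ Finset.HasAntidiagonal.antidiagonal m,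
          ∑ r ∈ Finset.Nat.antidiagonalTuple (s+1) ab.2,
            ∏ i : Fin (s+2), (((Fin.cons ab.1 r : Fin (s+2) → ℕ) i).factorial : ℝ)
        ≤ ∑ ab ∈ Finset.HasAntidiagonal.antidiagonal m,
            (ab.1.factorial : ℝ) * (4 ^ s * ab.2.factorial) :=
          Finset.sum_le_sum fun ab _ => hstep ab
    _ = 4 ^ s * ∑ ab ∈ Finset.HasAntidiagonal.antidiagonal m,
          (ab.1.factorial * ab.2.factorial : ℝ) := by
        rw [Finset.mul_sum]; apply Finset.sum_congr rfl; intros; ring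
    _ ≤ 4 ^ s * (4 * m.factorial) :=
        mul_le_mul_of_nonneg_left (sum_fact_antidiag_le m) (by positivity)
    _ = 4 ^ (s+1) * m.factorial := by ring

private theorem fact_add_le (j n : ℕ) : ∀ s : ℕ, s ≤ n - 1 →
    (j + s).factorial ≤ j.factorial * (j + n - 1) ^ s := by
  intro s
  induction s with
  | zero => simp
  | succ s ih =>
    intro hs
    have h1 : (j + (s+1)).factorial = (j + s + 1) * (j + s).factorial := by
      rw [show j + (s+1) = (j+s) + 1 by ring, Nat.factorial_succ]
    rw [h1, pow_succ]
    calc (j + s + 1) * (j + s).factorial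
        ≤ (j + n - 1) * (j.factorial * (j + n - 1) ^ s) :=
          Nat.mul_le_mul (by omega) (ih (by omega))
    _ = j.factorial * ((j + n - 1) ^ s * (j + n - 1)) := by ring

/-- If `Γ ≥ 0`, `τ₀ > 0`, `4Γτ₀(n+j-1) < 1`, and `μ` is nonnegative
with `μ 0 = 1` and `μ i ≤ i! τ₀^i` for `1 ≤ i ≤ j+n-1`, then
`M_n[j] ≤ j! Γ τ₀^j / (1 - 4(j+n-1)Γτ₀)^{j+1}`. -/
theorem Mker_le_closed (n j : ℕ) (Γ τ₀ : ℝ) (hΓ : 0 ≤ Γ) (hτ : 0 < τ₀)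
    (hsmall : 4 * Γ * τ₀ * ((n : ℝ) + j - 1) < 1)
    (μ : ℕ → ℝ) (hμ0 : μ 0 = 1) (hμnonneg : ∀ i, 0 ≤ μ i)
    (hμ : ∀ i, 1 ≤ i → i ≤ j + n - 1 → μ i ≤ i.factorial * τ₀ ^ i) :
    Mker Γ μ n j ≤ j.factorial * Γ * τ₀ ^ j /
      (1 - 4 * ((j : ℝ) + n - 1) * Γ * τ₀) ^ (j + 1) := by
  set x : ℝ := 4 * ((j : ℝ) + n - 1) * Γ * τ₀ with hx
  have hD : 0 < 1 - x := by
    have : x = 4 * Γ * τ₀ * ((n : ℝ) + j - 1) := by rw [hx]; ring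
    rw [this]; linarith
  rcases Nat.eq_zero_or_pos n with hn | hn
  · subst hn
    have : Mker Γ μ 0 j = 0 := by
      simp [Mker]
    rw [this]
    apply div_nonneg (by positivity) (by positivity)
  -- n ≥ 1
  have hxnonneg : 0 ≤ x := by
    have h1 : (0:ℝ) ≤ (j : ℝ) + n - 1 := by
      have : (1:ℝ) ≤ (n:ℝ) := by exact_mod_cast hn
      have : (0:ℝ) ≤ (j:ℝ) := Nat.cast_nonneg j
      linarith
    rw [hx]; positivity
  have hcast : ((j + n - 1 : ℕ) : ℝ) = (j : ℝ) + n - 1 := by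
    rw [Nat.cast_sub (by omega : 1 ≤ j + n)]
    push_cast; ring
  -- per-k bound
  have hkey : ∀ k ∈ Finset.Icc 1 n,
      ∑ q ∈ Finset.Nat.antidiagonalTuple k (j + k - 1), ∏ i : Fin k, (Γ * μ (q i))
      ≤ (j.factorial * Γ * τ₀ ^ j) * x ^ (k - 1) := by
    intro k hk
    rw [Finset.mem_Icc] at hk
    obtain ⟨hk1, hkn⟩ := hk
    obtain ⟨s, rfl⟩ : ∃ s, k = s + 1 := ⟨k - 1, by omega⟩
    have hm : j + (s+1) - 1 = j + s := by omega
    rw [hm]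
    -- step 1: pointwise bound
    have hpt : ∀ q ∈ Finset.Nat.antidiagonalTuple (s+1) (j + s),
        ∏ i : Fin (s+1), (Γ * μ (q i))
          ≤ Γ ^ (s+1) * τ₀ ^ (j + s) * ∏ i, ((q i).factorial : ℝ) := by
      intro q hq
      rw [Finset.Nat.mem_antidiagonalTuple] at hq
      have hqi : ∀ i, q i ≤ j + n - 1 := by
        intro i
        have : q i ≤ j + s := hq ▸ Finset.single_le_sum (f := q)
          (fun _ _ => Nat.zero_le _) (Finset.mem_univ i)
        omega
      have hμall : ∀ i : Fin (s+1), μ (q i) ≤ (q i).factorial * τ₀ ^ (q i) := by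
        intro i
        rcases Nat.eq_zero_or_pos (q i) with h0 | h0
        · rw [h0, hμ0]; simp
        · exact hμ (q i) h0 (hqi i)
      calc ∏ i : Fin (s+1), (Γ * μ (q i))
          = Γ ^ (s+1) * ∏ i : Fin (s+1), μ (q i) := by
            rw [Finset.prod_mul_distrib, Finset.prod_const, Finset.card_univ,
              Fintype.card_fin]
      _ ≤ Γ ^ (s+1) * ∏ i : Fin (s+1), (((q i).factorial : ℝ) * τ₀ ^ (q i)) := by
            apply mul_le_mul_of_nonneg_left _ (by positivity)
            exact Finset.prod_le_prod (fun i _ => hμnonneg (q i)) (fun i _ => hμall i)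
      _ = Γ ^ (s+1) * τ₀ ^ (j + s) * ∏ i, ((q i).factorial : ℝ) := by
            rw [Finset.prod_mul_distrib, ← hq, Finset.prod_pow_eq_pow_sum]
            ring
    calc ∑ q ∈ Finset.Nat.antidiagonalTuple (s+1) (j + s), ∏ i : Fin (s+1), (Γ * μ (q i))
        ≤ ∑ q ∈ Finset.Nat.antidiagonalTuple (s+1) (j + s),
              Γ ^ (s+1) * τ₀ ^ (j + s) * ∏ i, ((q i).factorial : ℝ) :=
          Finset.sum_le_sum hpt
    _ = Γ ^ (s+1) * τ₀ ^ (j + s) *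
          ∑ q ∈ Finset.Nat.antidiagonalTuple (s+1) (j + s), ∏ i, ((q i).factorial : ℝ) := by
        rw [Finset.mul_sum]
    _ ≤ Γ ^ (s+1) * τ₀ ^ (j + s) * (4 ^ s * (j+s).factorial) := by
        apply mul_le_mul_of_nonneg_left (sum_prod_fact_le s (j+s)) (by positivity)
    _ ≤ Γ ^ (s+1) * τ₀ ^ (j + s) *
          (4 ^ s * (j.factorial * ((j + n - 1 : ℕ) : ℝ) ^ s)) := by
        apply mul_le_mul_of_nonneg_left _ (by positivity)
        apply mul_le_mul_of_nonneg_left _ (by positivity)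
        have := fact_add_le j n s (by omega)
        exact_mod_cast this
    _ = (j.factorial * Γ * τ₀ ^ j) * x ^ (s + 1 - 1) := by
        rw [hcast, hx]
        simp only [Nat.add_sub_cancel]
        rw [pow_succ, pow_add, mul_pow, mul_pow, mul_pow]
        ring
  -- sum the geometric series
  have hsum : ∑ k ∈ Finset.Icc 1 n, x ^ (k - 1) ≤ 1 / (1 - x) := by
    have hre : ∑ k ∈ Finset.Icc 1 n, x ^ (k - 1) = ∑ i ∈ Finset.range n, x ^ i := by
      rw [← Finset.Ico_add_one_right_eq_Icc, Finset.sum_Ico_eq_sum_range]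
      simp
    rw [hre, le_div_iff₀ hD]
    have := geom_sum_mul x n
    have hxn : 0 ≤ x ^ n := by positivity
    nlinarith [this]
  have hfinal : 1 / (1 - x) ≤ 1 / (1 - x) ^ (j + 1) := by
    apply one_div_le_one_div_of_le (by positivity)
    calc (1 - x) ^ (j + 1) ≤ (1 - x) ^ 1 :=
        pow_le_pow_of_le_one (le_of_lt hD) (by linarith) (by omega)
    _ = 1 - x := pow_one _
  calc Mker Γ μ n j
      ≤ ∑ k ∈ Finset.Icc 1 n, (j.factorial * Γ * τ₀ ^ j) * x ^ (k - 1) :=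
        Finset.sum_le_sum hkey
  _ = (j.factorial * Γ * τ₀ ^ j) * ∑ k ∈ Finset.Icc 1 n, x ^ (k - 1) := by
      rw [Finset.mul_sum]
  _ ≤ (j.factorial * Γ * τ₀ ^ j) * (1 / (1 - x) ^ (j+1)) := by
      apply mul_le_mul_of_nonneg_left _ (by positivity)
      exact le_trans hsum hfinal
  _ = j.factorial * Γ * τ₀ ^ j / (1 - x) ^ (j + 1) := by ring
end

section
/- Let M : ℕ → ℝ be a nonnegative sequence and let g : ℕ → ℕ → ℝ be a nonnegative doubly-indexed family satisfying: (i) g(0,j) ≤ M(j) for all j ∈ ℕ, and (ii) g(m,j) ≤ ∑_{k=0}^{j} C(j,k)·g(0,k)·g(m−1, j−k+1) for all m ≥ 1 and all j ∈ ℕ. Then for all m, j ∈ ℕ: g(m,j) ≤ ∑ over m-tuples (k_1,…,k_m) of nonnegative integers with k_1+⋯+k_m ≤ j+m−1 of M(j+m−∑_{i=1}^{m} k_i) · ∏_{l=1}^{m} C₀(j+l−1−∑_{i=1}^{l−1} k_i, k_l)·M(k_l). -/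
noncomputable def Fsum (M : ℕ → ℝ) (m j : ℕ) : ℝ :=
  ∑ s ∈ Finset.range (j + m - 1 + 1), ∑ kt ∈ Finset.Nat.antidiagonalTuple m s,
    M (j + m - s) *
      ∏ l : Fin m,
        (C0 ((j : ℤ) + (l : ℤ) - ∑ i ∈ Finset.Iio l, (kt i : ℤ)) (kt l) : ℝ) * M (kt l)

lemma Fsum_nonneg (M : ℕ → ℝ) (hM : ∀ j, 0 ≤ M j) (m j : ℕ) : 0 ≤ Fsum M m j := by
  unfold Fsum
  refine Finset.sum_nonneg fun s _ => Finset.sum_nonneg fun kt _ => mul_nonneg (hM _) ?_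
  exact Finset.prod_nonneg fun l _ => mul_nonneg (by positivity) (hM _)

lemma Fsum_zero (M : ℕ → ℝ) (j : ℕ) : Fsum M 0 j = M j := by
  unfold Fsum
  rw [Finset.sum_eq_single_of_mem 0 (by simp)]
  · simp [Finset.Nat.antidiagonalTuple_zero_zero]
  · intro s _ hs
    obtain ⟨t, rfl⟩ := Nat.exists_eq_succ_of_ne_zero hs
    simp [Finset.Nat.antidiagonalTuple_zero_succ]

lemma sum_Iio_cons_succ {m : ℕ} (k : ℕ) (kt : Fin m → ℕ) (l : Fin m) :
    ∑ i ∈ Finset.Iio l.succ, ((Fin.cons k kt : Fin (m+1) → ℕ) i : ℤ)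
      = (k : ℤ) + ∑ i ∈ Finset.Iio l, (kt i : ℤ) := by
  have h : Finset.Iio l.succ = insert 0 ((Finset.Iio l).map (Fin.succEmb m)) := by
    ext x
    induction x using Fin.cases with
    | zero => simp [Fin.succ_pos]
    | succ i =>
      simp only [Finset.mem_Iio, Finset.mem_insert, Finset.mem_map, Fin.succ_lt_succ_iff]
      constructor
      · intro hi
        exact Or.inr ⟨i, by simpa [Fin.succEmb] using hi⟩
      · rintro (h | ⟨y, hy, hyx⟩)
        · exact absurd h (Fin.succ_ne_zero i)
        · have : y = i := by
            apply Fin.succ_injective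
            simpa [Fin.succEmb] using hyx
          subst this; simpa using hy
  rw [h, Finset.sum_insert (by simp [Fin.succEmb, Fin.succ_ne_zero]), Finset.sum_map]
  simp [Fin.succEmb]

lemma Fsum_step (M : ℕ → ℝ) (hM : ∀ j, 0 ≤ M j) (m j : ℕ) :
    ∑ k ∈ Finset.range (j + 1), (j.choose k : ℝ) * M k * Fsum M m (j - k + 1)
      ≤ Fsum M (m + 1) j := by
  classical
  set T : Finset ((_ : ℕ) × (Fin (m+1) → ℕ)) :=
    (Finset.range (j + (m+1) - 1 + 1)).sigma
      (fun s => Finset.Nat.antidiagonalTuple (m+1) s) with hT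
  set S : Finset ((_ : ℕ) × (_ : ℕ) × (Fin m → ℕ)) :=
    (Finset.range (j + 1)).sigma (fun k =>
      (Finset.range ((j - k + 1) + m - 1 + 1)).sigma
        (fun s' => Finset.Nat.antidiagonalTuple m s')) with hS
  set h : ((_ : ℕ) × (Fin (m+1) → ℕ)) → ℝ := fun q => M (j + (m+1) - q.1) *
      ∏ l : Fin (m+1),
        (C0 ((j : ℤ) + (l : ℤ) - ∑ i ∈ Finset.Iio l, (q.2 i : ℤ)) (q.2 l) : ℝ) * M (q.2 l)
    with hh
  set f : ((_ : ℕ) × (_ : ℕ) × (Fin m → ℕ)) → ℝ := fun p =>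
      (j.choose p.1 : ℝ) * M p.1 *
        (M ((j - p.1 + 1) + m - p.2.1) *
          ∏ l : Fin m,
            (C0 (((j - p.1 + 1 : ℕ) : ℤ) + (l : ℤ) - ∑ i ∈ Finset.Iio l, (p.2.2 i : ℤ))
              (p.2.2 l) : ℝ) * M (p.2.2 l)) with hf
  set e : ((_ : ℕ) × (_ : ℕ) × (Fin m → ℕ)) → ((_ : ℕ) × (Fin (m+1) → ℕ)) :=
    fun p => ⟨p.1 + p.2.1, Fin.cons p.1 p.2.2⟩ with he
  have hRHS : Fsum M (m+1) j = ∑ q ∈ T, h q := by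
    rw [Fsum, hT, Finset.sum_sigma]
  have hLHS : (∑ k ∈ Finset.range (j + 1), (j.choose k : ℝ) * M k * Fsum M m (j - k + 1))
      = ∑ p ∈ S, f p := by
    rw [hS, Finset.sum_sigma]
    refine Finset.sum_congr rfl fun k _ => ?_
    rw [Finset.sum_sigma, Fsum, Finset.mul_sum]
    refine Finset.sum_congr rfl fun s' _ => ?_
    rw [Finset.mul_sum]
  have hinj : ∀ p ∈ S, ∀ p' ∈ S, e p = e p' → p = p' := by
    rintro ⟨k, s', kt'⟩ hp ⟨k2, s2, kt2⟩ hp' hpe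
    simp only [hS, Finset.mem_sigma, Finset.mem_range,
      Finset.Nat.mem_antidiagonalTuple] at hp hp'
    simp only [he, Sigma.mk.inj_iff] at hpe
    obtain ⟨h1, h2⟩ := hpe
    rw [heq_eq_eq, Fin.cons_inj] at h2
    obtain ⟨rfl, rfl⟩ := h2
    have : s' = s2 := by omega
    subst this; rfl
  have key : ∀ p ∈ S, f p = h (e p) := by
    rintro ⟨k, s', kt'⟩ hp
    simp only [hS, Finset.mem_sigma, Finset.mem_range,
      Finset.Nat.mem_antidiagonalTuple] at hp
    obtain ⟨hk, hs', hsum⟩ := hp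
    have hkj : k ≤ j := by omega
    have hIio0 : Finset.Iio (0 : Fin (m+1)) = ∅ := by
      ext x; simp [Fin.not_lt_zero]
    simp only [hf, he, hh]
    rw [Fin.prod_univ_succ]
    have e0 : (C0 ((j : ℤ) + ((0 : Fin (m+1)) : ℤ)
          - ∑ i ∈ Finset.Iio (0 : Fin (m+1)), ((Fin.cons k kt' : Fin (m+1) → ℕ) i : ℤ))
          ((Fin.cons k kt' : Fin (m+1) → ℕ) 0) : ℝ) * M ((Fin.cons k kt' : Fin (m+1) → ℕ) 0)
        = (j.choose k : ℝ) * M k := by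
      simp [hIio0, C0]
    have esucc : ∀ i : Fin m,
        (C0 ((j : ℤ) + ((i.succ : Fin (m+1)) : ℤ)
            - ∑ i' ∈ Finset.Iio i.succ, ((Fin.cons k kt' : Fin (m+1) → ℕ) i' : ℤ))
            ((Fin.cons k kt' : Fin (m+1) → ℕ) i.succ) : ℝ)
            * M ((Fin.cons k kt' : Fin (m+1) → ℕ) i.succ)
        = (C0 (((j - k + 1 : ℕ) : ℤ) + (i : ℤ) - ∑ i' ∈ Finset.Iio i, (kt' i' : ℤ)) (kt' i) : ℝ)
            * M (kt' i) := by
      intro i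
      have harg : (j : ℤ) + ((i.succ : Fin (m+1)) : ℤ)
            - ((k : ℤ) + ∑ i' ∈ Finset.Iio i, (kt' i' : ℤ))
          = ((j - k + 1 : ℕ) : ℤ) + (i : ℤ) - ∑ i' ∈ Finset.Iio i, (kt' i' : ℤ) := by
        have hv : ((i.succ : Fin (m+1)) : ℤ) = (i : ℤ) + 1 := by
          push_cast [Fin.val_succ]; ring
        rw [hv]
        generalize (∑ i' ∈ Finset.Iio i, (kt' i' : ℤ)) = A
        omega
      rw [sum_Iio_cons_succ, Fin.cons_succ, harg]
    rw [e0, Finset.prod_congr rfl (fun i _ => esucc i)]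
    have hM' : j + (m+1) - (k + s') = (j - k + 1) + m - s' := by omega
    rw [hM']
    ring
  have hsub : S.image e ⊆ T := by
    intro q hq
    simp only [Finset.mem_image] at hq
    obtain ⟨⟨k, s', kt'⟩, hp, rfl⟩ := hq
    simp only [hS, Finset.mem_sigma, Finset.mem_range,
      Finset.Nat.mem_antidiagonalTuple] at hp
    obtain ⟨hk, hs', hsum⟩ := hp
    simp only [hT, Finset.mem_sigma, Finset.mem_range,
      Finset.Nat.mem_antidiagonalTuple, he]
    refine ⟨by omega, ?_⟩
    rw [Fin.sum_univ_succ]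
    simp [hsum]
  have hnn : ∀ q, 0 ≤ h q := by
    intro q
    refine mul_nonneg (hM _) (Finset.prod_nonneg fun l _ => mul_nonneg (by positivity) (hM _))
  rw [hLHS, hRHS]
  calc (∑ p ∈ S, f p) = ∑ q ∈ S.image e, h q := by
        rw [Finset.sum_image hinj]
        exact Finset.sum_congr rfl key
    _ ≤ ∑ q ∈ T, h q :=
        Finset.sum_le_sum_of_subset_of_nonneg hsub (fun q _ _ => hnn q)

/-- Let `M : ℕ → ℝ` be nonnegative and `g : ℕ → ℕ → ℝ` nonnegative with
`g 0 j ≤ M j` and `g m j ≤ ∑_{k=0}^{j} C(j,k) g(0,k) g(m-1, j-k+1)` for `m ≥ 1`. Then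
`g m j ≤ ∑_{k₁+⋯+k_m ≤ j+m-1} M(j+m-∑kᵢ) ∏_{l=1}^m C₀(j+l-1-∑_{i<l}kᵢ, k_l) M(k_l)`. -/
theorem g_le_weak_comp_expansion (M : ℕ → ℝ) (hM : ∀ j, 0 ≤ M j)
    (g : ℕ → ℕ → ℝ) (hg : ∀ m j, 0 ≤ g m j)
    (h0 : ∀ j, g 0 j ≤ M j)
    (hrec : ∀ m, 1 ≤ m → ∀ j, g m j ≤
      ∑ k ∈ Finset.range (j + 1), (j.choose k : ℝ) * g 0 k * g (m - 1) (j - k + 1)) :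
    ∀ m j, g m j ≤
      ∑ s ∈ Finset.range (j + m - 1 + 1), ∑ kt ∈ Finset.Nat.antidiagonalTuple m s,
        M (j + m - s) *
          ∏ l : Fin m,
            (C0 ((j : ℤ) + (l : ℤ) - ∑ i ∈ Finset.Iio l, (kt i : ℤ)) (kt l) : ℝ) * M (kt l) := by
  intro m
  induction m with
  | zero =>
    intro j
    show g 0 j ≤ Fsum M 0 j
    rw [Fsum_zero]
    exact h0 j
  | succ n ih =>
    intro j
    show g (n + 1) j ≤ Fsum M (n + 1) j
    calc g (n + 1) j
        ≤ ∑ k ∈ Finset.range (j + 1),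
            (j.choose k : ℝ) * g 0 k * g ((n + 1) - 1) (j - k + 1) :=
          hrec (n + 1) (by omega) j
      _ ≤ ∑ k ∈ Finset.range (j + 1),
            (j.choose k : ℝ) * M k * Fsum M n (j - k + 1) := by
          refine Finset.sum_le_sum fun k _ => ?_
          simp only [Nat.add_sub_cancel]
          have h2 : g n (j - k + 1) ≤ Fsum M n (j - k + 1) := ih (j - k + 1)
          have h1 : g 0 k ≤ M k := h0 k
          exact mul_le_mul (mul_le_mul_of_nonneg_left h1 (by positivity)) h2
            (hg _ _) (mul_nonneg (by positivity) (hM k))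
      _ ≤ Fsum M (n + 1) j := Fsum_step M hM n j
end

section
/- Let m ≥ 1 and n ≥ 1 be natural numbers, let Γ, τ₀ be positive reals with Γτ₀ < 1/4 and 4Γτ₀·(m+n−1) < 1, and let μ : ℕ → ℝ be a sequence of nonnegative reals with μ_0 = 1 and μ_i ≤ i!·τ₀^i for all integers 1 ≤ i ≤ m+n−1. Then B(m,n)/Γ ≤ ((m−1)!+1)·m!·(Γτ₀)^m / (1−4(m+n−1)Γτ₀)^{2m+1} + n!·(4Γτ₀)^n · ∑_{k=0}^{m} h(k)·k!·(Γτ₀)^k / (1−4(m+n−1)Γτ₀)^{2k}, where h(0) := 1 and h(k) := (k−1)!+1 for k ≥ 1. -/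
open Finset


/-- `B(m,n) := ∑_{(q₁,…,q_{m+1}) ∈ W_{m+1}^m} ∏_{l=1}^{m+1} C₀(l-1-∑_{i<l}qᵢ, q_l) M_n[q_l]
+ ε_n ∑_{k=0}^{m} ∑_{(q₁,…,q_k) ∈ W_k^k} ∏_{l=1}^{k} C₀(l-∑_{i<l}qᵢ, q_l) M_n[q_l]`,
where the `k = 0` term of the second sum is `1`. -/
noncomputable def Bfun (Γ : ℝ) (μ : ℕ → ℝ) (m n : ℕ) : ℝ :=
  (∑ q ∈ Finset.Nat.antidiagonalTuple (m + 1) m,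
    ∏ l : Fin (m + 1),
      (C0 ((l : ℤ) - ∑ i ∈ Finset.Iio l, (q i : ℤ)) (q l) : ℝ) * Mker Γ μ n (q l))
  + eps Γ μ n *
      ∑ k ∈ Finset.range (m + 1), ∑ q ∈ Finset.Nat.antidiagonalTuple k k,
        ∏ l : Fin k,
          (C0 ((l : ℤ) + 1 - ∑ i ∈ Finset.Iio l, (q i : ℤ)) (q l) : ℝ) * Mker Γ μ n (q l)

lemma C0_of_nonneg (a : ℤ) (h : 0 ≤ a) (b : ℕ) : C0 a b = a.toNat.choose b := if_pos h
lemma C0_eq_zero (a : ℤ) (b : ℕ) (h : a < (b : ℤ)) : C0 a b = 0 := by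
  unfold C0; split
  · exact Nat.choose_eq_zero_of_lt (by omega)
  · rfl

theorem sum_adt_snoc {M : Type*} [AddCommMonoid M] (k N : ℕ) (f : (Fin (k+1) → ℕ) → M) :
    ∑ q ∈ Finset.Nat.antidiagonalTuple (k+1) N, f q
    = ∑ ab ∈ Finset.HasAntidiagonal.antidiagonal N, ∑ q ∈ Finset.Nat.antidiagonalTuple k ab.2,
        f (Fin.snoc q ab.1 : Fin (k+1) → ℕ) := by
  rw [Finset.sum_sigma']
  refine (Finset.sum_nbij' (i := fun (p : Σ _ : ℕ × ℕ, (Fin k → ℕ)) =>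
      (Fin.snoc p.2 p.1.1 : Fin (k+1) → ℕ))
    (j := fun q => ⟨(q (Fin.last k), ∑ i : Fin k, q (Fin.castSucc i)),
      fun i => q (Fin.castSucc i)⟩) ?_ ?_ ?_ ?_ ?_).symm
  · rintro ⟨⟨a,b⟩,q⟩ hp
    simp only [Finset.mem_sigma, Finset.HasAntidiagonal.mem_antidiagonal, Finset.Nat.mem_antidiagonalTuple] at hp ⊢
    rw [Fin.sum_univ_castSucc]
    simp only [Fin.snoc_castSucc, Fin.snoc_last]
    rw [hp.2]
    rw [← hp.1]; ring
  · intro q hq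
    simp only [Finset.Nat.mem_antidiagonalTuple] at hq
    simp only [Finset.mem_sigma, Finset.HasAntidiagonal.mem_antidiagonal, Finset.Nat.mem_antidiagonalTuple]
    exact ⟨by rw [← hq, Fin.sum_univ_castSucc]; ring, trivial⟩
  · rintro ⟨⟨a,b⟩,q⟩ hp
    simp only [Finset.mem_sigma, Finset.HasAntidiagonal.mem_antidiagonal, Finset.Nat.mem_antidiagonalTuple] at hp
    simp only [Fin.snoc_castSucc, Fin.snoc_last]
    congr 1
    exact congrArg _ hp.2
  · intro q hq
    funext i
    refine Fin.lastCases ?_ (fun j => ?_) i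
    · simp
    · simp
  · intros; rfl

lemma Iio_castSucc_eq (k : ℕ) (l : Fin k) :
    Finset.Iio (Fin.castSucc l) = (Finset.Iio l).map Fin.castSuccEmb := by
  ext i
  simp only [Finset.mem_Iio, Finset.mem_map]
  constructor
  · intro hi
    have hik : (i : ℕ) < k := lt_of_lt_of_le (by exact_mod_cast hi) l.2.le
    refine ⟨⟨i, hik⟩, by simpa [Fin.lt_def] using hi, ?_⟩
    exact Fin.ext rfl
  · rintro ⟨j, hj, rfl⟩
    exact Fin.castSucc_lt_castSucc_iff.mpr hj

lemma Iio_last_eq (k : ℕ) :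
    Finset.Iio (Fin.last k) = Finset.univ.map Fin.castSuccEmb := by
  ext i
  simp only [Finset.mem_Iio, Finset.mem_map, Finset.mem_univ, true_and]
  constructor
  · intro hi
    exact ⟨⟨i, by simpa [Fin.lt_def] using hi⟩, rfl⟩
  · rintro ⟨j, rfl⟩
    simp [Fin.lt_def, j.2]

lemma sum_Iio_snoc {M : Type*} [AddCommMonoid M] (k : ℕ) (q : Fin k → ℕ) (a : ℕ)
    (g : ℕ → M) (l : Fin k) :
    ∑ i ∈ Finset.Iio (Fin.castSucc l), g ((Fin.snoc q a : Fin (k+1) → ℕ) i)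
      = ∑ i ∈ Finset.Iio l, g (q i) := by
  rw [Iio_castSucc_eq, Finset.sum_map]
  refine Finset.sum_congr rfl fun i _ => ?_
  rw [show Fin.castSuccEmb i = Fin.castSucc i from rfl, Fin.snoc_castSucc]

lemma sum_Iio_last_snoc {M : Type*} [AddCommMonoid M] (k : ℕ) (q : Fin k → ℕ) (a : ℕ)
    (g : ℕ → M) :
    ∑ i ∈ Finset.Iio (Fin.last k), g ((Fin.snoc q a : Fin (k+1) → ℕ) i)
      = ∑ i : Fin k, g (q i) := by
  rw [Iio_last_eq, Finset.sum_map]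
  refine Finset.sum_congr rfl fun i _ => ?_
  rw [show Fin.castSuccEmb i = Fin.castSucc i from rfl, Fin.snoc_castSucc]

noncomputable def Freal (k N : ℕ) : ℝ :=
  (k + N).factorial / (2 ^ N * N.factorial * (k - N).factorial)

lemma Freal_nonneg (k N : ℕ) : 0 ≤ Freal k N := by
  unfold Freal
  positivity

/-- key summation identity -/
lemma key_ident (K : ℕ) : ∀ N : ℕ, N ≤ K + 1 →
    ∑ b ∈ Finset.range (N+1),
      (if b ≤ K then Freal K b * ((K + 1 - b).factorial : ℝ) else 0)
      = ((K + 1 + N).factorial : ℝ) / (2 ^ N * N.factorial) := by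
  intro N
  induction N with
  | zero =>
    intro _
    have hKf : ((K.factorial : ℝ)) ≠ 0 := by positivity
    simp [Freal]
    rw [div_self hKf, one_mul]
  | succ N ih =>
    intro hN
    rw [Finset.sum_range_succ, ih (by omega)]
    rcases Nat.lt_or_ge N K with h | h
    · -- N + 1 ≤ K
      rw [if_pos (by omega)]
      obtain ⟨d, rfl⟩ : ∃ d, K = N + 1 + d := ⟨K - (N+1), by omega⟩
      unfold Freal
      have h1 : N + 1 + d + (N + 1) = 2*N + d + 2 := by ring
      have h2 : N + 1 + d - (N + 1) = d := by omega
      have h3 : N + 1 + d + 1 - (N + 1) = d + 1 := by omega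
      have h4 : N + 1 + d + 1 + N = 2*N + d + 2 := by omega
      have h5 : N + 1 + d + 1 + (N + 1) = 2*N + d + 3 := by omega
      rw [h1, h2, h3, h4, h5]
      have e1 : ((2*N+d+2).factorial : ℝ) = (2*N+d+2) * (2*N+d+1).factorial := by
        exact_mod_cast Nat.factorial_succ (2*N+d+1)
      have e2 : ((2*N+d+3).factorial : ℝ) = (2*N+d+3) * ((2*N+d+2) * (2*N+d+1).factorial) := by
        rw [show (2*N+d+3) = (2*N+d+2)+1 from rfl, Nat.factorial_succ]
        push_cast [e1]
        ring
      have e3 : ((d+1).factorial : ℝ) = (d+1) * d.factorial := by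
        exact_mod_cast Nat.factorial_succ d
      have e4 : ((N+1).factorial : ℝ) = (N+1) * N.factorial := by
        exact_mod_cast Nat.factorial_succ N
      have hd : (d.factorial : ℝ) ≠ 0 := by positivity
      have hNf : (N.factorial : ℝ) ≠ 0 := by positivity
      simp only [e1, e2, e3, e4]
      field_simp
      ring
    · -- N = K (since N ≤ K from N+1 ≤ K+1 and N ≥ K)
      have hNK : N = K := by omega
      subst hNK
      rw [if_neg (by omega), add_zero]
      have e2 : ((N + 1 + (N+1)).factorial : ℝ) = (2*N+2) * ((N + 1 + N).factorial) := by
        rw [show N + 1 + (N+1) = (N+1+N)+1 from rfl, Nat.factorial_succ]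
        push_cast
        ring_nf
      have e4 : ((N+1).factorial : ℝ) = (N+1) * N.factorial := by
        exact_mod_cast Nat.factorial_succ N
      have hNf : (N.factorial : ℝ) ≠ 0 := by positivity
      rw [e2, e4]
      field_simp
      ring

def Tgen (c : ℤ) (k N : ℕ) : ℕ :=
  ∑ q ∈ Finset.Nat.antidiagonalTuple k N,
    ∏ l : Fin k, C0 ((l : ℤ) + 1 + c - ∑ i ∈ Finset.Iio l, (q i : ℤ)) (q l) * (q l).factorial

lemma Tgen_succ (c : ℤ) (k N : ℕ) :
    Tgen c (k+1) N = ∑ ab ∈ Finset.HasAntidiagonal.antidiagonal N,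
      C0 ((k : ℤ) + 1 + c - ab.2) ab.1 * ab.1.factorial * Tgen c k ab.2 := by
  unfold Tgen
  rw [sum_adt_snoc]
  refine Finset.sum_congr rfl fun ab hab => ?_
  rw [Finset.mul_sum]
  refine Finset.sum_congr rfl fun q hq => ?_
  rw [Fin.prod_univ_castSucc]
  have hlast : ((Fin.last k : Fin (k+1)) : ℤ) = (k : ℤ) := by simp
  have hsum : ∑ i ∈ Finset.Iio (Fin.last k), ((Fin.snoc q ab.1 : Fin (k+1) → ℕ) i : ℤ)
      = (ab.2 : ℤ) := by
    rw [sum_Iio_last_snoc k q ab.1 (fun x => (x : ℤ))]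
    rw [Finset.Nat.mem_antidiagonalTuple] at hq
    exact_mod_cast congrArg (Nat.cast : ℕ → ℤ) hq
  have hstep : ∀ l : Fin k,
      C0 (((Fin.castSucc l : Fin (k+1)) : ℤ) + 1 + c -
          ∑ i ∈ Finset.Iio (Fin.castSucc l), ((Fin.snoc q ab.1 : Fin (k+1) → ℕ) i : ℤ))
        ((Fin.snoc q ab.1 : Fin (k+1) → ℕ) (Fin.castSucc l))
        * ((Fin.snoc q ab.1 : Fin (k+1) → ℕ) (Fin.castSucc l)).factorial
      = C0 ((l : ℤ) + 1 + c - ∑ i ∈ Finset.Iio l, (q i : ℤ)) (q l) * (q l).factorial := by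
    intro l
    rw [sum_Iio_snoc k q ab.1 (fun x => (x : ℤ)) l, Fin.snoc_castSucc]
    norm_num
  rw [Finset.prod_congr rfl fun l _ => hstep l]
  rw [Fin.snoc_last, hlast, hsum]
  ring

lemma Tgen_zero (c : ℤ) (N : ℕ) : Tgen c 0 N = if N = 0 then 1 else 0 := by
  unfold Tgen
  cases N with
  | zero => rw [Finset.Nat.antidiagonalTuple_zero_zero]; simp
  | succ N => rw [Finset.Nat.antidiagonalTuple_zero_succ]; simp

lemma Tgen_one (c : ℤ) (N : ℕ) : Tgen c 1 N = C0 (1 + c) N * N.factorial := by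
  unfold Tgen
  rw [Finset.Nat.antidiagonalTuple_one, Finset.sum_singleton]
  rw [Fin.prod_univ_one]
  simp

/-- generic induction step -/
lemma step_bound (K k : ℕ) (c : ℤ) (hc : (k : ℤ) + 1 + c = (K : ℤ) + 1)
    (ih : ∀ b : ℕ, (b ≤ K → ((Tgen c k b : ℝ)) ≤ Freal K b) ∧ (K < b → Tgen c k b = 0)) :
    ∀ N : ℕ, (N ≤ K + 1 → ((Tgen c (k+1) N : ℝ)) ≤ Freal (K+1) N) ∧
      (K + 1 < N → Tgen c (k+1) N = 0) := by
  intro N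
  constructor
  · intro hN
    rw [Tgen_succ, hc]
    push_cast
    have hterm : ∀ ab ∈ Finset.HasAntidiagonal.antidiagonal N,
        ((C0 ((K : ℤ) + 1 - ab.2) ab.1 * ab.1.factorial * Tgen c k ab.2 : ℕ) : ℝ)
        ≤ (if ab.2 ≤ K then Freal K ab.2 * ((K + 1 - ab.2).factorial : ℝ) else 0)
            / ((K + 1 - N).factorial : ℝ) := by
      rintro ⟨a, b⟩ hab
      rw [Finset.HasAntidiagonal.mem_antidiagonal] at hab
      simp only
      by_cases hbK : b ≤ K
      · rw [if_pos hbK]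
        have ha : a ≤ K + 1 - b := by omega
        have hC : C0 ((K : ℤ) + 1 - b) a = (K + 1 - b).choose a := by
          rw [C0_of_nonneg _ (by omega)]
          congr 1
          omega
        have hcf : ((K + 1 - b).choose a * a.factorial * (K + 1 - b - a).factorial
            = (K + 1 - b).factorial) := Nat.choose_mul_factorial_mul_factorial ha
        have hba : K + 1 - b - a = K + 1 - N := by omega
        rw [hba] at hcf
        have hTb : ((Tgen c k b : ℝ)) ≤ Freal K b := (ih b).1 hbK
        have hT0 : (0 : ℝ) ≤ (Tgen c k b : ℝ) := Nat.cast_nonneg _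
        have hfac : ((K+1-N).factorial : ℝ) > 0 := by positivity
        rw [hC]
        push_cast
        rw [div_eq_mul_inv, mul_comm (Freal K b)]
        calc ((K + 1 - b).choose a : ℝ) * a.factorial * Tgen c k b
            ≤ ((K + 1 - b).choose a : ℝ) * a.factorial * Freal K b := by
              apply mul_le_mul_of_nonneg_left hTb (by positivity)
          _ = ((K + 1 - b).factorial : ℝ) / ((K+1-N).factorial : ℝ) * Freal K b := by
              rw [show ((K + 1 - b).factorial : ℝ)
                  = ((K + 1 - b).choose a : ℝ) * a.factorial * (K+1-N).factorial by
                exact_mod_cast congrArg (Nat.cast : ℕ → ℝ) hcf.symm]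
              field_simp
          _ = ((K + 1 - b).factorial : ℝ) * ((K+1-N).factorial : ℝ)⁻¹ * Freal K b := by
              rw [div_eq_mul_inv]
          _ = ((K + 1 - b).factorial : ℝ) * Freal K b * ((K+1-N).factorial : ℝ)⁻¹ := by ring
      · rw [if_neg hbK, (ih b).2 (by omega)]
        simp
    calc ∑ ab ∈ Finset.HasAntidiagonal.antidiagonal N,
          ((C0 ((K : ℤ) + 1 - ab.2) ab.1 : ℝ) * ab.1.factorial * Tgen c k ab.2)
        = ∑ ab ∈ Finset.HasAntidiagonal.antidiagonal N,
          (((C0 ((K : ℤ) + 1 - ab.2) ab.1 * ab.1.factorial * Tgen c k ab.2 : ℕ) : ℝ)) := by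
          refine Finset.sum_congr rfl fun ab _ => ?_
          push_cast; ring
      _ ≤ ∑ ab ∈ Finset.HasAntidiagonal.antidiagonal N,
          (if ab.2 ≤ K then Freal K ab.2 * ((K + 1 - ab.2).factorial : ℝ) else 0)
            / ((K + 1 - N).factorial : ℝ) := Finset.sum_le_sum hterm
      _ = (∑ b ∈ Finset.range (N+1),
          (if b ≤ K then Freal K b * ((K + 1 - b).factorial : ℝ) else 0))
            / ((K + 1 - N).factorial : ℝ) := by
          rw [← Finset.sum_div]
          congr 1
          rw [Finset.Nat.sum_antidiagonal_eq_sum_range_succ_mk,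
            ← Finset.sum_range_reflect
              (fun b => if b ≤ K then Freal K b * ((K + 1 - b).factorial : ℝ) else 0) (N+1)]
          refine Finset.sum_congr rfl fun i hi => ?_
          have hi' : N + 1 - 1 - i = N - i := by omega
          rw [hi']
      _ = ((K + 1 + N).factorial : ℝ) / (2 ^ N * N.factorial)
            / ((K + 1 - N).factorial : ℝ) := by rw [key_ident K N hN]
      _ = Freal (K+1) N := by
          unfold Freal
          rw [div_div]
  · intro hN
    rw [Tgen_succ]
    apply Finset.sum_eq_zero
    rintro ⟨a, b⟩ hab
    rw [Finset.HasAntidiagonal.mem_antidiagonal] at hab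
    simp only
    have : C0 ((k : ℤ) + 1 + c - b) a = 0 := by
      apply C0_eq_zero
      omega
    rw [this, zero_mul, zero_mul]

lemma N_le_choose : ∀ N i : ℕ, 1 ≤ i → i < N → N ≤ N.choose i := by
  intro N
  induction N with
  | zero => intro i h1 h2; omega
  | succ N ih =>
    intro i h1 h2
    rcases Nat.eq_or_lt_of_le h1 with h|h
    · rw [← h, Nat.choose_one_right]
    rcases Nat.eq_or_lt_of_le (Nat.lt_succ_iff.mp h2) with h'|h'
    · rw [h', Nat.choose_succ_self_right]
    · -- 2 ≤ i, i < N
      obtain ⟨j, rfl⟩ : ∃ j, i = j + 1 := ⟨i - 1, by omega⟩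
      rw [Nat.choose_succ_succ]
      have a1 : N ≤ N.choose j := by
        rcases Nat.eq_or_lt_of_le (show 1 ≤ j by omega) with hj|hj
        · rw [← hj, Nat.choose_one_right]
        · exact ih j (by omega) (by omega)
      have a2 : 1 ≤ N.choose (j+1) := Nat.choose_pos (by omega)
      have a3 : N.choose j.succ = N.choose (j+1) := rfl
      omega

lemma sum_fact_antidiag (N : ℕ) :
    ∑ ab ∈ Finset.HasAntidiagonal.antidiagonal N, ab.1.factorial * ab.2.factorial
      ≤ 4 * N.factorial := by
  rw [Finset.Nat.sum_antidiagonal_eq_sum_range_succ_mk]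
  cases N with
  | zero => simp
  | succ M =>
    set N := M + 1 with hNdef
    have hsplit : ∑ i ∈ Finset.range (N+1), (i.factorial * (N - i).factorial)
        = N.factorial + (∑ i ∈ Finset.range M, ((i+1).factorial * (N - (i+1)).factorial))
          + N.factorial := by
      rw [Finset.sum_range_succ']
      rw [Finset.sum_range_succ]
      have e0 : Nat.factorial 0 * (N - 0).factorial = N.factorial := by simp
      have eM : (M+1).factorial * (N - (M+1)).factorial = N.factorial := by
        rw [hNdef]; simp [Nat.sub_self]
      rw [e0, eM]
      ring
    have hmid : ∀ i ∈ Finset.range M,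
        N * ((i+1).factorial * (N - (i+1)).factorial) ≤ N.factorial := by
      intro i hi
      rw [Finset.mem_range] at hi
      have h1 : i + 1 ≤ N := by omega
      have h2 : N ≤ N.choose (i+1) := N_le_choose N (i+1) (by omega) (by omega)
      have h3 : N.choose (i+1) * ((i+1).factorial * (N - (i+1)).factorial) = N.factorial := by
        rw [← Nat.choose_mul_factorial_mul_factorial h1]; ring
      calc N * ((i+1).factorial * (N - (i+1)).factorial)
          ≤ N.choose (i+1) * ((i+1).factorial * (N - (i+1)).factorial) :=
            Nat.mul_le_mul_right _ h2
        _ = N.factorial := h3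
    have hmidsum : N * (∑ i ∈ Finset.range M, ((i+1).factorial * (N - (i+1)).factorial))
        ≤ M * N.factorial := by
      rw [Finset.mul_sum]
      calc ∑ i ∈ Finset.range M, N * ((i+1).factorial * (N - (i+1)).factorial)
          ≤ ∑ _i ∈ Finset.range M, N.factorial := Finset.sum_le_sum hmid
        _ = M * N.factorial := by rw [Finset.sum_const, Finset.card_range, smul_eq_mul]
    have hN : 0 < N := by omega
    have : N * (∑ i ∈ Finset.range (N+1), (i.factorial * (N - i).factorial))
        ≤ N * (4 * N.factorial) := by
      rw [hsplit]
      have : M * N.factorial ≤ N * N.factorial := Nat.mul_le_mul_right _ (by omega)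
      calc N * (N.factorial + (∑ i ∈ Finset.range M,
              ((i+1).factorial * (N - (i+1)).factorial)) + N.factorial)
          = N * N.factorial + N * (∑ i ∈ Finset.range M,
              ((i+1).factorial * (N - (i+1)).factorial)) + N * N.factorial := by ring
        _ ≤ N * N.factorial + M * N.factorial + N * N.factorial := by
            omega
        _ ≤ N * (4 * N.factorial) := by
            have : M * N.factorial ≤ N * N.factorial := Nat.mul_le_mul_right _ (by omega)
            nlinarith
    exact Nat.le_of_mul_le_mul_left this hN

lemma fact_ineq (k : ℕ) :
    (2*k).factorial ≤ (if k = 0 then 1 else ((k-1).factorial + 1)) * k.factorial * k.factorial * 2^k := by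
  rcases Nat.lt_or_ge k 4 with h|h
  · interval_cases k <;> decide
  · -- k ≥ 4, induct from 3
    clear h
    induction k with
    | zero => decide
    | succ k ih =>
      rcases Nat.lt_or_ge (k+1) 4 with h|h
      · have hk' : k ≤ 2 := by omega
        interval_cases k <;> decide
      have hk3 : 3 ≤ k := by omega
      have hk0 : k ≠ 0 := by omega
      rw [if_neg hk0] at ih
      rw [if_neg (by omega)]
      have h2 : 2*(k+1) = (2*k+1) + 1 := by ring
      rw [h2, Nat.factorial_succ, show 2*k+1 = (2*k)+1 from rfl, Nat.factorial_succ]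
      have hfk : k.factorial = k * (k-1).factorial := by
        conv_lhs => rw [show k = (k-1)+1 by omega]
        rw [Nat.factorial_succ]
        congr 1
        omega
      have key : (2*k+1) * ((k-1).factorial + 1) ≤ (k+1) * (k.factorial + 1) := by
        have h1 : 1 ≤ (k-1).factorial := Nat.one_le_iff_ne_zero.mpr (Nat.factorial_ne_zero _)
        rw [hfk]
        nlinarith
      have hsimp : k + 1 - 1 = k := by omega
      rw [hsimp]
      calc (2*k+1+1) * ((2*k+1) * (2*k).factorial)
          ≤ (2*k+1+1) * ((2*k+1) * (((k-1).factorial + 1) * k.factorial * k.factorial * 2^k)) := by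
            exact Nat.mul_le_mul_left _ (Nat.mul_le_mul_left _ ih)
        _ = (2*(k+1)) * (((2*k+1) * ((k-1).factorial + 1)) * k.factorial * k.factorial * 2^k) := by ring
        _ ≤ (2*(k+1)) * (((k+1) * (k.factorial + 1)) * k.factorial * k.factorial * 2^k) := by
            refine Nat.mul_le_mul_left _ ?_
            refine Nat.mul_le_mul_right _ (Nat.mul_le_mul_right _ (Nat.mul_le_mul_right _ key))
        _ = (k.factorial + 1) * ((k+1) * k.factorial) * ((k+1) * k.factorial) * 2^(k+1) := by
            rw [pow_succ]
            ring
        _ = (k.factorial + 1) * (k+1).factorial * (k+1).factorial * 2^(k+1) := by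
            rw [Nat.factorial_succ]

lemma Tgen0_bound : ∀ k, ∀ b : ℕ,
    (b ≤ k → ((Tgen 0 k b : ℝ)) ≤ Freal k b) ∧ (k < b → Tgen 0 k b = 0) := by
  intro k
  induction k with
  | zero =>
    intro b
    constructor
    · intro hb
      rw [Nat.le_zero] at hb
      subst hb
      rw [Tgen_zero, if_pos rfl]
      unfold Freal
      norm_num
    · intro hb
      rw [Tgen_zero, if_neg (by omega)]
  | succ k ih =>
    exact step_bound k k 0 (by ring) ih

lemma TgenNeg_bound : ∀ k, 1 ≤ k → ∀ b : ℕ,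
    (b + 1 ≤ k → ((Tgen (-1) k b : ℝ)) ≤ Freal (k-1) b) ∧ (k - 1 < b → Tgen (-1) k b = 0) := by
  intro k hk
  induction k, hk using Nat.le_induction with
  | base =>
    intro b
    constructor
    · intro hb
      have hb0 : b = 0 := by omega
      subst hb0
      rw [Tgen_one]
      norm_num [C0]
      unfold Freal
      norm_num
    · intro hb
      rw [Tgen_one]
      have : C0 (1 + (-1)) b = 0 := by
        have : (1 : ℤ) + (-1) = 0 := by ring
        rw [this]
        unfold C0
        rw [if_pos le_rfl]
        exact Nat.choose_eq_zero_of_lt (by omega)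
      rw [this, zero_mul]
  | succ k hk1 ih =>
    have h1 : k - 1 + 1 = k := by omega
    have := step_bound (k-1) k (-1) (by push_cast; omega) (by
      intro b
      refine ⟨fun hb => (ih b).1 (by omega), (ih b).2⟩)
    rw [h1] at this
    intro b
    constructor
    · intro hb
      have h2 : (k+1) - 1 = k := by omega
      rw [h2]
      exact (this b).1 (by omega)
    · intro hb
      exact (this b).2 (by omega)

lemma Freal_diag_le (k : ℕ) :
    Freal k k ≤ (if k = 0 then (1:ℝ) else ((k-1).factorial + 1 : ℝ)) * k.factorial := by
  unfold Freal
  rw [Nat.sub_self, Nat.factorial_zero]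
  have h2 : k + k = 2 * k := by ring
  rw [h2]
  rw [div_le_iff₀ (by positivity)]
  have := fact_ineq k
  have hcast : ((2*k).factorial : ℝ)
      ≤ (if k = 0 then (1:ℝ) else ((k-1).factorial + 1 : ℝ)) * k.factorial * k.factorial * 2^k := by
    rcases Nat.eq_zero_or_pos k with h|h
    · subst h; norm_num
    · rw [if_neg (by omega)]
      have := fact_ineq k
      rw [if_neg (by omega)] at this
      exact_mod_cast this
  calc ((2*k).factorial : ℝ)
      ≤ (if k = 0 then (1:ℝ) else ((k-1).factorial + 1 : ℝ)) * k.factorial * k.factorial * 2^k := hcast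
    _ = (if k = 0 then (1:ℝ) else ((k-1).factorial + 1 : ℝ)) * k.factorial * (2^k * k.factorial * (1:ℕ)) := by push_cast; ring

def Sfun (k N : ℕ) : ℕ :=
  ∑ q ∈ Finset.Nat.antidiagonalTuple k N, ∏ i : Fin k, (q i).factorial

lemma Sfun_succ (k N : ℕ) :
    Sfun (k+1) N = ∑ ab ∈ Finset.HasAntidiagonal.antidiagonal N, ab.1.factorial * Sfun k ab.2 := by
  unfold Sfun
  rw [sum_adt_snoc]
  refine Finset.sum_congr rfl fun ab _ => ?_
  rw [Finset.mul_sum]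
  refine Finset.sum_congr rfl fun q _ => ?_
  rw [Fin.prod_univ_castSucc]
  simp [Fin.snoc_castSucc, Fin.snoc_last, mul_comm]

lemma Sfun_le (k : ℕ) (hk : 1 ≤ k) (N : ℕ) : Sfun k N ≤ N.factorial * 4^(k-1) := by
  induction k, hk using Nat.le_induction generalizing N with
  | base =>
    unfold Sfun
    rw [Finset.Nat.antidiagonalTuple_one, Finset.sum_singleton, Fin.prod_univ_one]
    simp
  | succ k hk ih =>
    rw [Sfun_succ]
    calc ∑ ab ∈ Finset.HasAntidiagonal.antidiagonal N, ab.1.factorial * Sfun k ab.2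
        ≤ ∑ ab ∈ Finset.HasAntidiagonal.antidiagonal N, ab.1.factorial * (ab.2.factorial * 4^(k-1)) :=
          Finset.sum_le_sum fun ab _ => Nat.mul_le_mul_left _ (ih ab.2)
      _ = (∑ ab ∈ Finset.HasAntidiagonal.antidiagonal N, ab.1.factorial * ab.2.factorial) * 4^(k-1) := by
          rw [Finset.sum_mul]; exact Finset.sum_congr rfl fun ab _ => by ring
      _ ≤ (4 * N.factorial) * 4^(k-1) := Nat.mul_le_mul_right _ (sum_fact_antidiag N)
      _ = N.factorial * (4 * 4^(k-1)) := by ring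
      _ = N.factorial * 4^(k+1-1) := by
          congr 1
          rw [Nat.add_sub_cancel, ← pow_succ']
          congr 1
          omega

lemma fact_mul_pow_le (j r D : ℕ) (h : j + r ≤ D) :
    (j + r).factorial ≤ j.factorial * D^r := by
  induction r with
  | zero => simp
  | succ r ih =>
    have h' : j + r ≤ D := by omega
    rw [show j + (r+1) = (j+r)+1 from rfl, Nat.factorial_succ, pow_succ]
    calc (j + r + 1) * (j+r).factorial ≤ D * (j.factorial * D^r) := by
          exact Nat.mul_le_mul (by omega) (ih h')
      _ = j.factorial * (D^r * D) := by ring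

lemma Mker_nonneg (Γ : ℝ) (hΓ : 0 ≤ Γ) (μ : ℕ → ℝ) (hμ : ∀ i, 0 ≤ μ i) (n j : ℕ) :
    0 ≤ Mker Γ μ n j := by
  apply Finset.sum_nonneg
  intro k _
  apply Finset.sum_nonneg
  intro q _
  exact Finset.prod_nonneg fun i _ => mul_nonneg hΓ (hμ _)

/-- bound for a single inner sum of products -/
lemma inner_sum_le (Γ τ₀ : ℝ) (hΓ : 0 < Γ) (hτ : 0 < τ₀) (μ : ℕ → ℝ)
    (hμnonneg : ∀ i, 0 ≤ μ i) (D : ℕ)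
    (hμall : ∀ i, i ≤ D → μ i ≤ i.factorial * τ₀ ^ i) (k N : ℕ) (hND : N ≤ D) :
    ∑ q ∈ Finset.Nat.antidiagonalTuple k N, ∏ i : Fin k, (Γ * μ (q i))
      ≤ Γ^k * τ₀^N * (Sfun k N : ℝ) := by
  unfold Sfun
  push_cast
  rw [Finset.mul_sum]
  refine Finset.sum_le_sum fun q hq => ?_
  rw [Finset.Nat.mem_antidiagonalTuple] at hq
  have hqi : ∀ i : Fin k, q i ≤ N := by
    intro i
    rw [← hq]
    exact Finset.single_le_sum (f := fun i => q i) (fun _ _ => Nat.zero_le _) (Finset.mem_univ i)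
  calc ∏ i : Fin k, (Γ * μ (q i))
      ≤ ∏ i : Fin k, (Γ * (((q i).factorial : ℝ) * τ₀ ^ (q i))) := by
        refine Finset.prod_le_prod (fun i _ => mul_nonneg hΓ.le (hμnonneg _)) ?_
        intro i _
        exact mul_le_mul_of_nonneg_left (hμall _ (le_trans (hqi i) hND)) hΓ.le
    _ = Γ^k * (∏ i : Fin k, τ₀ ^ (q i)) * ∏ i : Fin k, ((q i).factorial : ℝ) := by
        rw [Finset.prod_mul_distrib, Finset.prod_const, Finset.prod_mul_distrib,
          Finset.card_univ, Fintype.card_fin]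
        ring
    _ = Γ^k * τ₀^N * ∏ i : Fin k, ((q i).factorial : ℝ) := by
        rw [Finset.prod_pow_eq_pow_sum, hq]

/-- Mker bound -/
lemma Mker_le_s11 (Γ τ₀ : ℝ) (hΓ : 0 < Γ) (hτ : 0 < τ₀) (μ : ℕ → ℝ)
    (hμnonneg : ∀ i, 0 ≤ μ i) (D : ℕ) (hD : 1 ≤ D)
    (hμall : ∀ i, i ≤ D → μ i ≤ i.factorial * τ₀ ^ i)
    (hs : 4 * Γ * τ₀ * (D : ℝ) < 1)
    (n j : ℕ) (hn : 1 ≤ n) (hjD : j + n - 1 ≤ D) :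
    Mker Γ μ n j ≤ Γ * τ₀^j * (j.factorial : ℝ) / (1 - 4 * Γ * τ₀ * (D : ℝ)) := by
  set s : ℝ := 4 * Γ * τ₀ * (D : ℝ) with hsdef
  have hs0 : 0 ≤ s := by positivity
  have hs1 : 0 < 1 - s := by linarith
  have hterm : ∀ k ∈ Finset.Icc 1 n,
      ∑ q ∈ Finset.Nat.antidiagonalTuple k (j + k - 1), ∏ i : Fin k, (Γ * μ (q i))
        ≤ Γ * τ₀^j * (j.factorial : ℝ) * s^(k-1) := by
    intro k hk
    rw [Finset.mem_Icc] at hk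
    have hk1 : 1 ≤ k := hk.1
    have hND : j + k - 1 ≤ D := by omega
    have e1 : j + k - 1 = j + (k - 1) := by omega
    calc ∑ q ∈ Finset.Nat.antidiagonalTuple k (j + k - 1), ∏ i : Fin k, (Γ * μ (q i))
        ≤ Γ^k * τ₀^(j+k-1) * (Sfun k (j+k-1) : ℝ) :=
          inner_sum_le Γ τ₀ hΓ hτ μ hμnonneg D hμall k _ hND
      _ ≤ Γ^k * τ₀^(j+k-1) * (((j+k-1).factorial : ℝ) * 4^(k-1)) := by
          refine mul_le_mul_of_nonneg_left ?_ (by positivity)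
          exact_mod_cast Sfun_le k hk1 (j+k-1)
      _ ≤ Γ^k * τ₀^(j+k-1) * (((j.factorial : ℝ) * (D:ℝ)^(k-1)) * 4^(k-1)) := by
          refine mul_le_mul_of_nonneg_left (mul_le_mul_of_nonneg_right ?_ (by positivity))
            (by positivity)
          rw [e1] at hND ⊢
          exact_mod_cast fact_mul_pow_le j (k-1) D hND
      _ = Γ * τ₀^j * (j.factorial : ℝ) * s^(k-1) := by
          rw [e1, pow_add]
          rw [show k = (k-1) + 1 by omega, pow_succ]
          rw [show k - 1 + 1 - 1 = k - 1 from by omega]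
          rw [hsdef]
          rw [mul_pow, mul_pow, mul_pow]
          ring
  calc Mker Γ μ n j ≤ ∑ k ∈ Finset.Icc 1 n, Γ * τ₀^j * (j.factorial : ℝ) * s^(k-1) :=
        Finset.sum_le_sum hterm
    _ = Γ * τ₀^j * (j.factorial : ℝ) * ∑ k ∈ Finset.Icc 1 n, s^(k-1) := by
        rw [Finset.mul_sum]
    _ ≤ Γ * τ₀^j * (j.factorial : ℝ) * (1 / (1 - s)) := by
        refine mul_le_mul_of_nonneg_left ?_ (by positivity)
        have : ∑ k ∈ Finset.Icc 1 n, s^(k-1) = ∑ i ∈ Finset.range n, s^i := by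
          rw [show Finset.Icc 1 n = Finset.Ico 1 (n+1) from by rw [Finset.Ico_add_one_right_eq_Icc],
            Finset.sum_Ico_eq_sum_range]
          simp
        rw [this]
        have hsne : s ≠ 1 := by linarith
        rw [geom_sum_eq hsne]
        have hflip : (s^n - 1)/(s - 1) = (1 - s^n)/(1 - s) := by
          rw [div_eq_div_iff (by linarith) (by linarith)]
          ring
        rw [hflip]
        have hpow : (0:ℝ) ≤ s^n := by positivity
        rw [div_le_div_iff₀ hs1 hs1]
        nlinarith
    _ = Γ * τ₀^j * (j.factorial : ℝ) / (1 - s) := by ring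

lemma sum_prod_le (c : ℤ) (k N : ℕ) (w : ℕ → ℝ) (hw0 : ∀ j, 0 ≤ w j)
    (K τ : ℝ) (hK : 0 ≤ K) (hτ : 0 ≤ τ)
    (hw : ∀ j, j ≤ N → w j ≤ K * τ^j * j.factorial) :
    ∑ q ∈ Finset.Nat.antidiagonalTuple k N, ∏ l : Fin k,
      (C0 ((l:ℤ) + 1 + c - ∑ i ∈ Finset.Iio l, (q i : ℤ)) (q l) : ℝ) * w (q l)
    ≤ K^k * τ^N * (Tgen c k N : ℝ) := by
  have hT : (Tgen c k N : ℝ) = ∑ q ∈ Finset.Nat.antidiagonalTuple k N, ∏ l : Fin k,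
      (C0 ((l:ℤ) + 1 + c - ∑ i ∈ Finset.Iio l, (q i : ℤ)) (q l) : ℝ) * ((q l).factorial : ℝ) := by
    unfold Tgen
    push_cast
    rfl
  rw [hT, Finset.mul_sum]
  refine Finset.sum_le_sum fun q hq => ?_
  rw [Finset.Nat.mem_antidiagonalTuple] at hq
  have hqi : ∀ l : Fin k, q l ≤ N := by
    intro l
    rw [← hq]
    exact Finset.single_le_sum (f := fun i => q i) (fun _ _ => Nat.zero_le _) (Finset.mem_univ l)
  calc ∏ l : Fin k, (C0 ((l:ℤ) + 1 + c - ∑ i ∈ Finset.Iio l, (q i : ℤ)) (q l) : ℝ) * w (q l)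
      ≤ ∏ l : Fin k, (C0 ((l:ℤ) + 1 + c - ∑ i ∈ Finset.Iio l, (q i : ℤ)) (q l) : ℝ)
          * (K * τ^(q l) * ((q l).factorial : ℝ)) := by
        refine Finset.prod_le_prod (fun l _ => mul_nonneg (Nat.cast_nonneg _) (hw0 _)) ?_
        intro l _
        exact mul_le_mul_of_nonneg_left (hw _ (hqi l)) (Nat.cast_nonneg _)
    _ = K^k * τ^N * ∏ l : Fin k,
          (C0 ((l:ℤ) + 1 + c - ∑ i ∈ Finset.Iio l, (q i : ℤ)) (q l) : ℝ)
            * ((q l).factorial : ℝ) := by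
        have base : ∀ g f : Fin k → ℝ,
            ∏ l : Fin k, (g l * (K * τ^(q l) * f l)) = K^k * τ^N * ∏ l : Fin k, (g l * f l) := by
          intro g f
          calc ∏ l : Fin k, (g l * (K * τ^(q l) * f l))
              = (∏ l : Fin k, (K * τ^(q l))) * ∏ l : Fin k, (g l * f l) := by
                rw [← Finset.prod_mul_distrib]
                exact Finset.prod_congr rfl fun l _ => by ring
            _ = (K^k * τ^N) * ∏ l : Fin k, (g l * f l) := by
                rw [Finset.prod_mul_distrib, Finset.prod_const, Finset.card_univ,
                  Fintype.card_fin, Finset.prod_pow_eq_pow_sum, hq]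
            _ = K^k * τ^N * ∏ l : Fin k, (g l * f l) := by ring
        exact base (fun l => (C0 ((l:ℤ) + 1 + c - ∑ i ∈ Finset.Iio l, (q i : ℤ)) (q l) : ℝ))
          (fun l => ((q l).factorial : ℝ))

/-- (Simplified bound.) For `m, n ≥ 1`, `Γ, τ₀ > 0` with `Γτ₀ < 1/4` and
`4Γτ₀(m+n-1) < 1`, and `μ` nonnegative with `μ 0 = 1` and `μ i ≤ i! τ₀^i` for
`1 ≤ i ≤ m+n-1`, one has
`B(m,n)/Γ ≤ ((m-1)!+1) m! (Γτ₀)^m / (1-4(m+n-1)Γτ₀)^{2m+1}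
 + n! (4Γτ₀)^n ∑_{k=0}^{m} h(k) k! (Γτ₀)^k / (1-4(m+n-1)Γτ₀)^{2k}`,
where `h(0) = 1` and `h(k) = (k-1)!+1` for `k ≥ 1`. -/
theorem Bfun_le (m n : ℕ) (hm : 1 ≤ m) (hn : 1 ≤ n) (Γ τ₀ : ℝ)
    (hΓ : 0 < Γ) (hτ : 0 < τ₀) (hquarter : Γ * τ₀ < 1 / 4)
    (hsmall : 4 * Γ * τ₀ * ((m : ℝ) + n - 1) < 1)
    (μ : ℕ → ℝ) (hμ0 : μ 0 = 1) (hμnonneg : ∀ i, 0 ≤ μ i)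
    (hμ : ∀ i, 1 ≤ i → i ≤ m + n - 1 → μ i ≤ i.factorial * τ₀ ^ i) :
    Bfun Γ μ m n / Γ ≤
      ((m - 1).factorial + 1) * m.factorial * (Γ * τ₀) ^ m /
          (1 - 4 * ((m : ℝ) + n - 1) * Γ * τ₀) ^ (2 * m + 1)
      + n.factorial * (4 * Γ * τ₀) ^ n *
          ∑ k ∈ Finset.range (m + 1),
            (if k = 0 then (1 : ℝ) else ((k - 1).factorial + 1 : ℝ)) * k.factorial *
              (Γ * τ₀) ^ k / (1 - 4 * ((m : ℝ) + n - 1) * Γ * τ₀) ^ (2 * k) := by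
  classical
  have hmn1 : 1 ≤ m + n := by omega
  set D : ℕ := m + n - 1 with hDdef
  have hD1 : 1 ≤ D := by omega
  have hDc : ((D : ℕ) : ℝ) = (m : ℝ) + n - 1 := by
    rw [hDdef, Nat.cast_sub hmn1]
    push_cast
    ring
  set s : ℝ := 4 * Γ * τ₀ * ((D : ℕ) : ℝ) with hsdef
  have hs0 : 0 ≤ s := by positivity
  have hs1 : s < 1 := by rw [hsdef, hDc]; exact hsmall
  have h1s : 0 < 1 - s := by linarith
  have h1sle : 1 - s ≤ 1 := by linarith
  have hgoalden : 1 - 4 * ((m : ℝ) + n - 1) * Γ * τ₀ = 1 - s := by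
    rw [hsdef, hDc]; ring
  rw [hgoalden]
  have hμall : ∀ i, i ≤ D → μ i ≤ i.factorial * τ₀ ^ i := by
    intro i hi
    rcases Nat.eq_zero_or_pos i with h | h
    · subst h; rw [hμ0]; simp
    · exact hμ i h (by omega)
  set KK : ℝ := Γ / (1 - s) with hKK
  have hKK0 : 0 ≤ KK := by positivity
  have hMle : ∀ j, j ≤ m → Mker Γ μ n j ≤ KK * τ₀ ^ j * (j.factorial : ℝ) := by
    intro j hj
    calc Mker Γ μ n j
        ≤ Γ * τ₀ ^ j * (j.factorial : ℝ) / (1 - 4 * Γ * τ₀ * ((D : ℕ) : ℝ)) :=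
          Mker_le_s11 Γ τ₀ hΓ hτ μ hμnonneg D hD1 hμall (by rw [← hsdef]; exact hs1) n j hn
            (by omega)
      _ = KK * τ₀ ^ j * (j.factorial : ℝ) := by
          rw [hKK, ← hsdef]
          ring
  have hMnonneg := Mker_nonneg Γ hΓ.le μ hμnonneg n
  unfold Bfun
  rw [add_div]
  refine add_le_add ?_ ?_
  · -- first term
    have hEq : (∑ q ∈ Finset.Nat.antidiagonalTuple (m + 1) m, ∏ l : Fin (m + 1),
        (C0 ((l : ℤ) - ∑ i ∈ Finset.Iio l, (q i : ℤ)) (q l) : ℝ) * Mker Γ μ n (q l))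
        = ∑ q ∈ Finset.Nat.antidiagonalTuple (m + 1) m, ∏ l : Fin (m + 1),
        (C0 ((l : ℤ) + 1 + (-1) - ∑ i ∈ Finset.Iio l, (q i : ℤ)) (q l) : ℝ)
          * Mker Γ μ n (q l) := by
      refine Finset.sum_congr rfl fun q _ => Finset.prod_congr rfl fun l _ => ?_
      norm_num
    have hTneg : ((Tgen (-1) (m+1) m : ℕ) : ℝ) ≤ Freal m m := by
      have h := (TgenNeg_bound (m+1) (by omega) m).1 (by omega)
      rwa [Nat.add_sub_cancel] at h
    have hFm : Freal m m ≤ ((m-1).factorial + 1 : ℝ) * (m.factorial : ℝ) := by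
      have h := Freal_diag_le m
      rwa [if_neg (by omega)] at h
    have hA : (∑ q ∈ Finset.Nat.antidiagonalTuple (m + 1) m, ∏ l : Fin (m + 1),
        (C0 ((l : ℤ) - ∑ i ∈ Finset.Iio l, (q i : ℤ)) (q l) : ℝ) * Mker Γ μ n (q l))
        ≤ KK^(m+1) * τ₀^m * (((m-1).factorial + 1 : ℝ) * (m.factorial : ℝ)) := by
      rw [hEq]
      calc ∑ q ∈ Finset.Nat.antidiagonalTuple (m + 1) m, ∏ l : Fin (m + 1),
          (C0 ((l : ℤ) + 1 + (-1) - ∑ i ∈ Finset.Iio l, (q i : ℤ)) (q l) : ℝ)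
            * Mker Γ μ n (q l)
          ≤ KK^(m+1) * τ₀^m * ((Tgen (-1) (m+1) m : ℕ) : ℝ) :=
            sum_prod_le (-1) (m+1) m (Mker Γ μ n) (hMnonneg) KK τ₀ hKK0 hτ.le hMle
        _ ≤ KK^(m+1) * τ₀^m * (((m-1).factorial + 1 : ℝ) * (m.factorial : ℝ)) := by
            exact mul_le_mul_of_nonneg_left (hTneg.trans hFm) (by positivity)
    calc (∑ q ∈ Finset.Nat.antidiagonalTuple (m + 1) m, ∏ l : Fin (m + 1),
        (C0 ((l : ℤ) - ∑ i ∈ Finset.Iio l, (q i : ℤ)) (q l) : ℝ) * Mker Γ μ n (q l)) / Γ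
        ≤ (KK^(m+1) * τ₀^m * (((m-1).factorial + 1 : ℝ) * (m.factorial : ℝ))) / Γ := by
          gcongr
      _ = ((m-1).factorial + 1 : ℝ) * (m.factorial : ℝ) * (Γ * τ₀)^m / (1 - s)^(m+1) := by
          rw [hKK, div_pow]
          field_simp
          ring
      _ ≤ ((m-1).factorial + 1 : ℝ) * (m.factorial : ℝ) * (Γ * τ₀)^m / (1 - s)^(2*m+1) := by
          have hnum : (0:ℝ) ≤ ((m-1).factorial + 1 : ℝ) * (m.factorial : ℝ) * (Γ * τ₀)^m := by
            positivity
          have hpe : (1 - s)^(2*m+1) ≤ (1 - s)^(m+1) :=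
            pow_le_pow_of_le_one h1s.le h1sle (by omega)
          exact div_le_div_of_nonneg_left hnum (by positivity) hpe
  · -- second term
    have heps0 : 0 ≤ eps Γ μ n := by
      unfold eps
      refine mul_nonneg hΓ.le (Finset.sum_nonneg fun q _ => Finset.prod_nonneg
        fun i _ => mul_nonneg hΓ.le (hμnonneg _))
    have heps : eps Γ μ n ≤ Γ * ((n.factorial : ℝ) * (4 * Γ * τ₀)^n) := by
      unfold eps
      refine mul_le_mul_of_nonneg_left ?_ hΓ.le
      calc ∑ q ∈ Finset.Nat.antidiagonalTuple n n, ∏ i : Fin n, (Γ * μ (q i))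
          ≤ Γ^n * τ₀^n * ((Sfun n n : ℕ) : ℝ) :=
            inner_sum_le Γ τ₀ hΓ hτ μ hμnonneg D hμall n n (by omega)
        _ ≤ Γ^n * τ₀^n * ((n.factorial : ℝ) * 4^(n-1)) := by
            refine mul_le_mul_of_nonneg_left ?_ (by positivity)
            exact_mod_cast Sfun_le n hn n
        _ ≤ (n.factorial : ℝ) * (4 * Γ * τ₀)^n := by
            have h4 : (4:ℝ)^(n-1) ≤ 4^n := pow_le_pow_right₀ (by norm_num) (by omega)
            calc Γ^n * τ₀^n * ((n.factorial : ℝ) * 4^(n-1))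
                ≤ Γ^n * τ₀^n * ((n.factorial : ℝ) * 4^n) := by
                  refine mul_le_mul_of_nonneg_left ?_ (by positivity)
                  exact mul_le_mul_of_nonneg_left h4 (by positivity)
              _ = (n.factorial : ℝ) * (4 * Γ * τ₀)^n := by
                  rw [mul_pow, mul_pow]
                  ring
    have hBk : ∀ k ∈ Finset.range (m+1),
        (∑ q ∈ Finset.Nat.antidiagonalTuple k k, ∏ l : Fin k,
          (C0 ((l : ℤ) + 1 - ∑ i ∈ Finset.Iio l, (q i : ℤ)) (q l) : ℝ) * Mker Γ μ n (q l))
        ≤ (if k = 0 then (1 : ℝ) else ((k - 1).factorial + 1 : ℝ)) * k.factorial *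
            (Γ * τ₀) ^ k / (1 - s) ^ (2 * k) := by
      intro k hk
      rw [Finset.mem_range] at hk
      have hkm : k ≤ m := by omega
      have hEq : (∑ q ∈ Finset.Nat.antidiagonalTuple k k, ∏ l : Fin k,
          (C0 ((l : ℤ) + 1 - ∑ i ∈ Finset.Iio l, (q i : ℤ)) (q l) : ℝ) * Mker Γ μ n (q l))
          = ∑ q ∈ Finset.Nat.antidiagonalTuple k k, ∏ l : Fin k,
          (C0 ((l : ℤ) + 1 + 0 - ∑ i ∈ Finset.Iio l, (q i : ℤ)) (q l) : ℝ)
            * Mker Γ μ n (q l) := by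
        refine Finset.sum_congr rfl fun q _ => Finset.prod_congr rfl fun l _ => ?_
        norm_num
      have hc0 : (0:ℝ) ≤ (if k = 0 then (1 : ℝ) else ((k - 1).factorial + 1 : ℝ)) := by
        split <;> positivity
      rw [hEq]
      calc ∑ q ∈ Finset.Nat.antidiagonalTuple k k, ∏ l : Fin k,
          (C0 ((l : ℤ) + 1 + 0 - ∑ i ∈ Finset.Iio l, (q i : ℤ)) (q l) : ℝ) * Mker Γ μ n (q l)
          ≤ KK^k * τ₀^k * ((Tgen 0 k k : ℕ) : ℝ) :=
            sum_prod_le 0 k k (Mker Γ μ n) hMnonneg KK τ₀ hKK0 hτ.le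
              (fun j hj => hMle j (le_trans hj hkm))
        _ ≤ KK^k * τ₀^k *
              ((if k = 0 then (1 : ℝ) else ((k - 1).factorial + 1 : ℝ)) * k.factorial) := by
            refine mul_le_mul_of_nonneg_left ?_ (by positivity)
            exact ((Tgen0_bound k k).1 le_rfl).trans (Freal_diag_le k)
        _ = (if k = 0 then (1 : ℝ) else ((k - 1).factorial + 1 : ℝ)) * k.factorial
              * (Γ * τ₀)^k / (1 - s)^k := by
            rw [hKK, div_pow, mul_pow]
            field_simp
        _ ≤ (if k = 0 then (1 : ℝ) else ((k - 1).factorial + 1 : ℝ)) * k.factorial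
              * (Γ * τ₀)^k / (1 - s)^(2*k) := by
            have hnum : (0:ℝ) ≤ (if k = 0 then (1 : ℝ) else ((k - 1).factorial + 1 : ℝ))
                * k.factorial * (Γ * τ₀)^k := by
              refine mul_nonneg (mul_nonneg hc0 (by positivity)) (by positivity)
            have hpe : (1 - s)^(2*k) ≤ (1 - s)^k :=
              pow_le_pow_of_le_one h1s.le h1sle (by omega)
            exact div_le_div_of_nonneg_left hnum (by positivity) hpe
    have hB0 : (0:ℝ) ≤ ∑ k ∈ Finset.range (m + 1), ∑ q ∈ Finset.Nat.antidiagonalTuple k k,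
        ∏ l : Fin k,
          (C0 ((l : ℤ) + 1 - ∑ i ∈ Finset.Iio l, (q i : ℤ)) (q l) : ℝ) * Mker Γ μ n (q l) := by
      refine Finset.sum_nonneg fun k _ => Finset.sum_nonneg fun q _ =>
        Finset.prod_nonneg fun l _ => mul_nonneg (Nat.cast_nonneg _) (hMnonneg _)
    have hBsum : (∑ k ∈ Finset.range (m + 1), ∑ q ∈ Finset.Nat.antidiagonalTuple k k,
        ∏ l : Fin k,
          (C0 ((l : ℤ) + 1 - ∑ i ∈ Finset.Iio l, (q i : ℤ)) (q l) : ℝ) * Mker Γ μ n (q l))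
        ≤ ∑ k ∈ Finset.range (m + 1),
            (if k = 0 then (1 : ℝ) else ((k - 1).factorial + 1 : ℝ)) * k.factorial *
              (Γ * τ₀) ^ k / (1 - s) ^ (2 * k) := Finset.sum_le_sum hBk
    calc (eps Γ μ n * ∑ k ∈ Finset.range (m + 1), ∑ q ∈ Finset.Nat.antidiagonalTuple k k,
        ∏ l : Fin k,
          (C0 ((l : ℤ) + 1 - ∑ i ∈ Finset.Iio l, (q i : ℤ)) (q l) : ℝ) * Mker Γ μ n (q l)) / Γ
        ≤ (Γ * ((n.factorial : ℝ) * (4 * Γ * τ₀)^n) * ∑ k ∈ Finset.range (m + 1),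
            (if k = 0 then (1 : ℝ) else ((k - 1).factorial + 1 : ℝ)) * k.factorial *
              (Γ * τ₀) ^ k / (1 - s) ^ (2 * k)) / Γ := by
          refine div_le_div_of_nonneg_right ?_ hΓ.le
          exact mul_le_mul heps hBsum hB0 (by positivity)
      _ = (n.factorial : ℝ) * (4 * Γ * τ₀)^n * ∑ k ∈ Finset.range (m + 1),
            (if k = 0 then (1 : ℝ) else ((k - 1).factorial + 1 : ℝ)) * k.factorial *
              (Γ * τ₀) ^ k / (1 - s) ^ (2 * k) := by
          rw [mul_assoc]
          exact mul_div_cancel_left₀ _ hΓ.ne'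
end

section
/- Let I and J be nonempty finite types and consider complex square matrices indexed by I×J. For a matrix M indexed by I×J, define its partial trace over J to be the I-indexed matrix Tr_J(M) with entries (Tr_J M)(i,i') := ∑_{j∈J} M((i,j),(i',j)). Then for all complex matrices X, M, Y indexed by I×J: ‖Tr_J(X·M·Y)‖_tr ≤ ‖X‖·‖Y‖·‖M‖_tr, where ‖A‖_tr := Tr((Aᴴ·A)^{1/2}) is the trace norm (with (·)^{1/2} the positive semidefinite square root of the positive semidefinite matrix Aᴴ·A, and Aᴴ the conjugate transpose), and ‖·‖ is the ℓ²→ℓ² operator norm on matrices. -/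
open scoped ComplexOrder

/-- The partial trace over the second factor: `(Tr_J M)(i,i') = ∑_j M((i,j),(i',j))`. -/
noncomputable def partialTrace {I J : Type*} [Fintype J] (M : Matrix (I × J) (I × J) ℂ) :
    Matrix I I ℂ :=
  fun i i' => ∑ j : J, M (i, j) (i', j)

/-- The trace norm `‖A‖_tr = Tr((Aᴴ A)^{1/2})`, where `(·)^{1/2}` is the positive
semidefinite square root of the positive semidefinite matrix `Aᴴ A`. -/
noncomputable def traceNorm {n : Type*} [Fintype n] [DecidableEq n]
    (A : Matrix n n ℂ) : ℝ :=
  (Matrix.trace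
    (((Matrix.posSemidef_conjTranspose_mul_self A).1.eigenvectorUnitary : Matrix n n ℂ) *
      Matrix.diagonal (fun i => ((Real.sqrt
        ((Matrix.posSemidef_conjTranspose_mul_self A).1.eigenvalues i) : ℝ) : ℂ)) *
      (star (Matrix.posSemidef_conjTranspose_mul_self A).1.eigenvectorUnitary :
        Matrix n n ℂ))).re

/-- The `ℓ² → ℓ²` operator norm of a square complex matrix. -/
noncomputable def opNorm {n : Type*} [Fintype n] [DecidableEq n]
    (A : Matrix n n ℂ) : ℝ :=
  ‖Matrix.toEuclideanCLM (𝕜 := ℂ) A‖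

namespace TNAux

open Matrix Finset

variable {n : Type*} [Fintype n] [DecidableEq n]

lemma opNorm_nonneg (A : Matrix n n ℂ) : 0 ≤ opNorm A := norm_nonneg _

lemma inner_equiv_symm (x y : n → ℂ) :
    (inner ℂ ((WithLp.equiv 2 (n → ℂ)).symm x) ((WithLp.equiv 2 (n → ℂ)).symm y) : ℂ)
      = star x ⬝ᵥ y := by
  rw [dotProduct_comm]; rfl

lemma mulVec_norm_le (A : Matrix n n ℂ) (x : n → ℂ) :
    ‖(WithLp.equiv 2 (n → ℂ)).symm (A *ᵥ x)‖ ≤ opNorm A * ‖(WithLp.equiv 2 (n → ℂ)).symm x‖ := by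
  have h := (Matrix.toEuclideanCLM (𝕜 := ℂ) A).le_opNorm ((WithLp.equiv 2 (n → ℂ)).symm x)
  exact h

lemma opNorm_le_of {A : Matrix n n ℂ} {c : ℝ} (hc : 0 ≤ c)
    (h : ∀ x : n → ℂ, ‖(WithLp.equiv 2 (n → ℂ)).symm (A *ᵥ x)‖ ≤
      c * ‖(WithLp.equiv 2 (n → ℂ)).symm x‖) :
    opNorm A ≤ c := by
  refine ContinuousLinearMap.opNorm_le_bound _ hc fun x => ?_
  have h2 := h (WithLp.equiv 2 (n → ℂ) x)
  rw [Equiv.symm_apply_apply] at h2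
  calc ‖Matrix.toEuclideanCLM (𝕜 := ℂ) A x‖
      = ‖(WithLp.equiv 2 (n → ℂ)).symm (A *ᵥ (WithLp.equiv 2 (n → ℂ) x))‖ := by
        rfl
    _ ≤ c * ‖x‖ := h2

lemma opNorm_mul_le (A B : Matrix n n ℂ) : opNorm (A * B) ≤ opNorm A * opNorm B := by
  unfold opNorm
  rw [_root_.map_mul]
  exact norm_mul_le _ _

section Singular

variable (A : Matrix n n ℂ)

noncomputable def ev (k : n) : ℝ :=
  (Matrix.posSemidef_conjTranspose_mul_self A).1.eigenvalues k

noncomputable def evB : OrthonormalBasis n ℂ (EuclideanSpace ℂ n) :=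
  (Matrix.posSemidef_conjTranspose_mul_self A).1.eigenvectorBasis

noncomputable def V (k : n) : n → ℂ := ⇑(evB A k)

lemma ev_nonneg (k : n) : 0 ≤ ev A k :=
  (Matrix.posSemidef_conjTranspose_mul_self A).eigenvalues_nonneg k

lemma symm_V (k : n) : (WithLp.equiv 2 (n → ℂ)).symm (V A k) = evB A k := rfl

lemma mulVec_V (k : n) : (Aᴴ * A) *ᵥ V A k = ev A k • V A k :=
  (Matrix.posSemidef_conjTranspose_mul_self A).1.mulVec_eigenvectorBasis k

lemma V_on (k l : n) : star (V A k) ⬝ᵥ V A l = if k = l then 1 else 0 := by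
  have := orthonormal_iff_ite.mp (evB A).orthonormal k l
  rw [EuclideanSpace.inner_eq_star_dotProduct, dotProduct_comm] at this
  exact this

lemma norm_V (k : n) : ‖(WithLp.equiv 2 (n → ℂ)).symm (V A k)‖ = 1 := by
  rw [symm_V]
  exact (evB A).orthonormal.1 k

lemma AV_dot (k l : n) :
    star (A *ᵥ V A k) ⬝ᵥ (A *ᵥ V A l) = if k = l then (ev A l : ℂ) else 0 := by
  have hs : (ev A l) • V A l = ((ev A l : ℂ)) • V A l := by
    funext i; simp [Complex.real_smul]
  rw [star_mulVec, ← Matrix.dotProduct_mulVec, Matrix.mulVec_mulVec, mulVec_V, hs,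
    dotProduct_smul, V_on]
  simp [mul_ite]

lemma V_complete (i j : n) :
    (∑ k, V A k i * star (V A k j)) = (1 : Matrix n n ℂ) i j := by
  have h := (Matrix.posSemidef_conjTranspose_mul_self A).1.eigenvectorUnitary.2
  rw [Unitary.mem_iff] at h
  have h2 := congrFun (congrFun h.2 i) j
  rw [Matrix.mul_apply] at h2
  calc (∑ k, V A k i * star (V A k j))
      = ∑ k, ((Matrix.posSemidef_conjTranspose_mul_self A).1.eigenvectorUnitary : Matrix n n ℂ) i k
          * (star ((Matrix.posSemidef_conjTranspose_mul_self A).1.eigenvectorUnitary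
              : Matrix n n ℂ)) k j := by
        refine Finset.sum_congr rfl fun k _ => ?_
        rw [Matrix.IsHermitian.eigenvectorUnitary_apply]
        rw [Matrix.star_apply, Matrix.IsHermitian.eigenvectorUnitary_apply]
        rfl
    _ = (1 : Matrix n n ℂ) i j := h2

lemma trace_eq_sum_V (B : Matrix n n ℂ) :
    B.trace = ∑ k, star (V A k) ⬝ᵥ (B *ᵥ V A k) := by
  have : ∀ k, star (V A k) ⬝ᵥ (B *ᵥ V A k)
      = ∑ i, ∑ j, B i j * (V A k j * star (V A k i)) := by
    intro k
    simp only [dotProduct, mulVec, Pi.star_apply, Finset.mul_sum]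
    exact Finset.sum_congr rfl fun i _ => Finset.sum_congr rfl fun j _ => by ring
  simp_rw [this]
  rw [Finset.sum_comm]
  refine Eq.symm ?_
  calc ∑ i, ∑ k, ∑ j, B i j * (V A k j * star (V A k i))
      = ∑ i, ∑ j, B i j * ∑ k, V A k j * star (V A k i) := by
        refine Finset.sum_congr rfl fun i _ => ?_
        rw [Finset.sum_comm]
        exact Finset.sum_congr rfl fun j _ => by rw [Finset.mul_sum]
    _ = ∑ i, ∑ j, B i j * (1 : Matrix n n ℂ) j i := by
        simp_rw [V_complete]
    _ = B.trace := by
        simp [Matrix.trace, Matrix.one_apply, Matrix.diag]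

lemma traceNorm_eq_sum_sqrt : traceNorm A = ∑ k, Real.sqrt (ev A k) := by
  have h := (Matrix.posSemidef_conjTranspose_mul_self A).1.eigenvectorUnitary.2
  rw [Unitary.mem_iff] at h
  unfold traceNorm
  rw [Matrix.trace_mul_cycle, h.1, Matrix.one_mul, Matrix.trace_diagonal]
  rw [Complex.re_sum]
  exact Finset.sum_congr rfl fun k _ => by simp [ev]

lemma norm_AV (k : n) :
    ‖(WithLp.equiv 2 (n → ℂ)).symm (A *ᵥ V A k)‖ = Real.sqrt (ev A k) := by
  have h1 : (inner ℂ ((WithLp.equiv 2 (n → ℂ)).symm (A *ᵥ V A k))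
      ((WithLp.equiv 2 (n → ℂ)).symm (A *ᵥ V A k)) : ℂ) = ((ev A k : ℝ) : ℂ) := by
    rw [inner_equiv_symm]
    simpa using AV_dot A k k
  have h2 : ‖(WithLp.equiv 2 (n → ℂ)).symm (A *ᵥ V A k)‖ ^ 2 = ev A k := by
    rw [norm_sq_eq_re_inner (𝕜 := ℂ), h1]
    simp
  rw [← h2, Real.sqrt_sq (norm_nonneg _)]

lemma trace_mul_le (C : Matrix n n ℂ) : ‖(C * A).trace‖ ≤ opNorm C * traceNorm A := by
  rw [trace_eq_sum_V A (C * A), traceNorm_eq_sum_sqrt]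
  calc ‖∑ k, star (V A k) ⬝ᵥ ((C * A) *ᵥ V A k)‖
      ≤ ∑ k, ‖star (V A k) ⬝ᵥ ((C * A) *ᵥ V A k)‖ := norm_sum_le _ _
    _ ≤ ∑ k, opNorm C * Real.sqrt (ev A k) := by
        refine Finset.sum_le_sum fun k _ => ?_
        rw [← Matrix.mulVec_mulVec]
        rw [show star (V A k) ⬝ᵥ (C *ᵥ (A *ᵥ V A k))
            = (inner ℂ ((WithLp.equiv 2 (n → ℂ)).symm (V A k))
                ((WithLp.equiv 2 (n → ℂ)).symm (C *ᵥ (A *ᵥ V A k))) : ℂ) from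
          (inner_equiv_symm _ _).symm]
        refine le_trans (norm_inner_le_norm _ _) ?_
        rw [norm_V, one_mul]
        exact le_trans (mulVec_norm_le C _) (by rw [norm_AV])
    _ = opNorm C * ∑ k, Real.sqrt (ev A k) := by rw [Finset.mul_sum]

lemma trace_vecMulVec_mul (a b : n → ℂ) (B : Matrix n n ℂ) :
    (Matrix.vecMulVec a b * B).trace = b ⬝ᵥ (B *ᵥ a) := by
  simp only [Matrix.trace, Matrix.diag, Matrix.mul_apply, Matrix.vecMulVec_apply,
    dotProduct, mulVec]
  rw [Finset.sum_comm]
  refine Finset.sum_congr rfl fun j _ => ?_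
  rw [Finset.mul_sum]
  exact Finset.sum_congr rfl fun i _ => by ring

lemma vecMulVec_mulVec (a b x : n → ℂ) :
    Matrix.vecMulVec a b *ᵥ x = (b ⬝ᵥ x) • a := by
  funext i
  simp only [mulVec, Matrix.vecMulVec_apply, dotProduct, Pi.smul_apply, smul_eq_mul,
    Finset.sum_mul, Finset.mul_sum]
  exact Finset.sum_congr rfl fun j _ => by ring

lemma sum_mulVec' {ι : Type*} (s : Finset ι) (f : ι → Matrix n n ℂ) (x : n → ℂ) :
    (∑ k ∈ s, f k) *ᵥ x = ∑ k ∈ s, f k *ᵥ x := by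
  funext i
  simp only [mulVec, dotProduct, Matrix.sum_apply, Finset.sum_apply, Finset.sum_mul]
  rw [Finset.sum_comm]

lemma dotProduct_sum' {ι : Type*} (s : Finset ι) (v : n → ℂ) (w : ι → n → ℂ) :
    v ⬝ᵥ (∑ k ∈ s, w k) = ∑ k ∈ s, v ⬝ᵥ w k := by
  simp only [dotProduct, Finset.sum_apply, Finset.mul_sum]
  rw [Finset.sum_comm]

lemma exists_dual : ∃ W : Matrix n n ℂ,
    opNorm W ≤ 1 ∧ (W * A).trace = ((traceNorm A : ℝ) : ℂ) := by
  classical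
  set c : n → ℂ := fun k => if 0 < ev A k then (((Real.sqrt (ev A k) : ℝ) : ℂ))⁻¹ else 0
    with hc
  set W : Matrix n n ℂ := ∑ k, c k • Matrix.vecMulVec (V A k) (star (A *ᵥ V A k)) with hW
  have hek : ∀ k, ¬ 0 < ev A k → ev A k = 0 := fun k h =>
    le_antisymm (not_lt.1 h) (ev_nonneg A k)
  refine ⟨W, ?_, ?_⟩
  · -- operator norm at most 1
    refine opNorm_le_of zero_le_one fun x => ?_
    rw [one_mul]
    set d : n → ℂ := fun k => c k * (star (A *ᵥ V A k) ⬝ᵥ x) with hd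
    have hWx : W *ᵥ x = ∑ k, d k • V A k := by
      rw [hW, sum_mulVec']
      refine Finset.sum_congr rfl fun k _ => ?_
      rw [Matrix.smul_mulVec, vecMulVec_mulVec, smul_smul]
    -- coefficients of W *ᵥ x in the eigenbasis
    have hrepr : ∀ k, (evB A).repr ((WithLp.equiv 2 (n → ℂ)).symm (W *ᵥ x)) k = d k := by
      intro k
      rw [OrthonormalBasis.repr_apply_apply, ← symm_V,
        inner_equiv_symm, hWx, dotProduct_sum']
      have : ∀ l, star (V A k) ⬝ᵥ (d l • V A l) = d l * (star (V A k) ⬝ᵥ V A l) := by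
        intro l; rw [dotProduct_smul]; rfl
      simp_rw [this, V_on]
      simp
    have hnorm : ‖(WithLp.equiv 2 (n → ℂ)).symm (W *ᵥ x)‖ ^ 2 = ∑ k, ‖d k‖ ^ 2 := by
      rw [← (evB A).repr.norm_map ((WithLp.equiv 2 (n → ℂ)).symm (W *ᵥ x)),
        EuclideanSpace.norm_eq, Real.sq_sqrt (by positivity)]
      exact Finset.sum_congr rfl fun k _ => by rw [hrepr]
    -- Bessel
    set u : {k : n // 0 < ev A k} → EuclideanSpace ℂ n := fun k =>
      (((Real.sqrt (ev A k.1) : ℝ) : ℂ))⁻¹ • (WithLp.equiv 2 (n → ℂ)).symm (A *ᵥ V A k.1)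
      with hu
    have hsq : ∀ k : n, 0 < ev A k →
        ((Real.sqrt (ev A k) : ℝ) : ℂ) * ((Real.sqrt (ev A k) : ℝ) : ℂ) = (ev A k : ℂ) := by
      intro k hk
      rw [← Complex.ofReal_mul, Real.mul_self_sqrt (ev_nonneg A k)]
    have hne : ∀ k : n, 0 < ev A k → ((Real.sqrt (ev A k) : ℝ) : ℂ) ≠ 0 := by
      intro k hk
      simp only [ne_eq, Complex.ofReal_eq_zero]
      exact ne_of_gt (Real.sqrt_pos.2 hk)
    have huon : Orthonormal ℂ u := by
      rw [orthonormal_iff_ite]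
      intro k l
      rw [hu]
      simp only [inner_smul_left, inner_smul_right, inner_equiv_symm]
      rw [AV_dot]
      by_cases hkl : k = l
      · subst hkl
        rw [if_pos rfl, if_pos rfl]
        rw [← Complex.ofReal_inv, Complex.conj_ofReal, Complex.ofReal_inv]
        rw [← hsq k.1 k.2]
        field_simp [hne k.1 k.2]
      · rw [if_neg (fun h => hkl (Subtype.ext h)), if_neg hkl]
        simp
    have hbessel := huon.sum_inner_products_le (x := (WithLp.equiv 2 (n → ℂ)).symm x)
      (s := Finset.univ)
    -- identify coefficients with inner products against u
    have hdu : ∀ k : {k : n // 0 < ev A k},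
        ‖d k.1‖ ^ 2 = ‖(inner ℂ (u k) ((WithLp.equiv 2 (n → ℂ)).symm x) : ℂ)‖ ^ 2 := by
      intro k
      rw [hu]
      simp only [inner_smul_left, inner_equiv_symm]
      rw [← Complex.ofReal_inv, Complex.conj_ofReal, Complex.ofReal_inv]
      rw [hd, hc]
      simp only [if_pos k.2]
    have hsum : ∑ k, ‖d k‖ ^ 2 ≤ ‖(WithLp.equiv 2 (n → ℂ)).symm x‖ ^ 2 := by
      calc ∑ k, ‖d k‖ ^ 2 = ∑ k ∈ Finset.univ.filter (fun k => 0 < ev A k), ‖d k‖ ^ 2 := by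
            rw [← Finset.sum_filter_add_sum_filter_not Finset.univ (fun k => 0 < ev A k)]
            have hnotsum : ∑ k ∈ Finset.univ.filter (fun k => ¬ 0 < ev A k), ‖d k‖ ^ 2 = 0 := by
              refine Finset.sum_eq_zero fun k hk => ?_
              simp only [Finset.mem_filter, Finset.mem_univ, true_and] at hk
              simp [hd, hc, hk]
            rw [hnotsum, add_zero]
        _ = ∑ k : {k : n // 0 < ev A k}, ‖d k.1‖ ^ 2 :=
            Finset.sum_subtype _ (by simp) _
        _ = ∑ k : {k : n // 0 < ev A k},
              ‖(inner ℂ (u k) ((WithLp.equiv 2 (n → ℂ)).symm x) : ℂ)‖ ^ 2 :=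
            Finset.sum_congr rfl fun k _ => hdu k
        _ ≤ ‖(WithLp.equiv 2 (n → ℂ)).symm x‖ ^ 2 := hbessel
    calc ‖(WithLp.equiv 2 (n → ℂ)).symm (W *ᵥ x)‖
        = Real.sqrt (‖(WithLp.equiv 2 (n → ℂ)).symm (W *ᵥ x)‖ ^ 2) :=
          (Real.sqrt_sq (norm_nonneg _)).symm
      _ ≤ Real.sqrt (‖(WithLp.equiv 2 (n → ℂ)).symm x‖ ^ 2) := by
          apply Real.sqrt_le_sqrt
          rw [hnorm]
          exact hsum
      _ = ‖(WithLp.equiv 2 (n → ℂ)).symm x‖ := Real.sqrt_sq (norm_nonneg _)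
  · -- trace value
    have : (W * A).trace = ∑ k, c k * (ev A k : ℂ) := by
      rw [hW, Finset.sum_mul, Matrix.trace_sum]
      refine Finset.sum_congr rfl fun k _ => ?_
      rw [Matrix.smul_mul, Matrix.trace_smul, trace_vecMulVec_mul]
      have := AV_dot A k k
      rw [if_pos rfl] at this
      rw [this]
      rfl
    rw [this, traceNorm_eq_sum_sqrt]
    rw [Complex.ofReal_sum]
    refine Finset.sum_congr rfl fun k _ => ?_
    by_cases hk : 0 < ev A k
    · have hck : c k = (((Real.sqrt (ev A k) : ℝ) : ℂ))⁻¹ := by rw [hc]; simp [hk]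
      rw [hck]
      have h1 : (ev A k : ℂ) = ((Real.sqrt (ev A k) : ℝ) : ℂ) * ((Real.sqrt (ev A k) : ℝ) : ℂ) := by
        rw [← Complex.ofReal_mul, Real.mul_self_sqrt (ev_nonneg A k)]
      rw [h1]
      have h2 : ((Real.sqrt (ev A k) : ℝ) : ℂ) ≠ 0 := by
        simp only [ne_eq, Complex.ofReal_eq_zero]
        exact ne_of_gt (Real.sqrt_pos.2 hk)
      field_simp
    · have hck : c k = 0 := by rw [hc]; simp [hk]
      rw [hck, hek k hk]
      simp
end Singular

lemma traceNorm_nonneg (A : Matrix n n ℂ) : 0 ≤ traceNorm A := by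
  rw [traceNorm_eq_sum_sqrt]
  exact Finset.sum_nonneg fun k _ => Real.sqrt_nonneg _

end TNAux

section Main

open Matrix TNAux

variable {I J : Type*} [Fintype I] [Fintype J] [DecidableEq I] [DecidableEq J]

/-- `W ⊗ 1` -/
noncomputable def extid (W : Matrix I I ℂ) : Matrix (I × J) (I × J) ℂ :=
  fun p q => if p.2 = q.2 then W p.1 q.1 else 0

lemma trace_mul_partialTrace (W : Matrix I I ℂ) (N : Matrix (I × J) (I × J) ℂ) :
    (W * partialTrace N).trace = ((extid W : Matrix (I × J) (I × J) ℂ) * N).trace := by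
  simp only [Matrix.trace, Matrix.diag, Matrix.mul_apply, partialTrace, extid,
    Fintype.sum_prod_type, ite_mul, zero_mul, Finset.sum_ite_eq, Finset.mem_univ, if_true,
    Finset.mul_sum]
  exact Finset.sum_congr rfl fun i _ => Finset.sum_comm

lemma extid_mulVec (W : Matrix I I ℂ) (x : I × J → ℂ) (i : I) (j : J) :
    ((extid W : Matrix (I × J) (I × J) ℂ) *ᵥ x) (i, j)
      = (W *ᵥ fun i' => x (i', j)) i := by
  simp only [mulVec, dotProduct, extid, Fintype.sum_prod_type, ite_mul, zero_mul,
    Finset.sum_ite_eq, Finset.mem_univ, if_true]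

lemma opNorm_extid_le (W : Matrix I I ℂ) :
    opNorm (extid W : Matrix (I × J) (I × J) ℂ) ≤ opNorm W := by
  refine opNorm_le_of (opNorm_nonneg W) fun x => ?_
  rw [EuclideanSpace.norm_eq, EuclideanSpace.norm_eq]
  have key : ∑ p : I × J, ‖((WithLp.equiv 2 (I × J → ℂ)).symm
        ((extid W : Matrix (I × J) (I × J) ℂ) *ᵥ x)) p‖ ^ 2
      ≤ opNorm W ^ 2 * ∑ p : I × J, ‖((WithLp.equiv 2 (I × J → ℂ)).symm x) p‖ ^ 2 := by
    have hx : ∀ p : I × J, ((WithLp.equiv 2 (I × J → ℂ)).symm x) p = x p := fun _ => rfl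
    have hy : ∀ p : I × J, ((WithLp.equiv 2 (I × J → ℂ)).symm
        ((extid W : Matrix (I × J) (I × J) ℂ) *ᵥ x)) p
        = ((extid W : Matrix (I × J) (I × J) ℂ) *ᵥ x) p := fun _ => rfl
    simp_rw [hx, hy, Fintype.sum_prod_type]
    have step : ∀ j, ∑ i, ‖((extid W : Matrix (I × J) (I × J) ℂ) *ᵥ x) (i, j)‖ ^ 2
        ≤ opNorm W ^ 2 * ∑ i, ‖x (i, j)‖ ^ 2 := by
      intro j
      have hWj := mulVec_norm_le W (fun i' => x (i', j))
      rw [EuclideanSpace.norm_eq, EuclideanSpace.norm_eq] at hWj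
      have e1 : ∀ i, ((WithLp.equiv 2 (I → ℂ)).symm (W *ᵥ fun i' => x (i', j))) i
          = (W *ᵥ fun i' => x (i', j)) i := fun _ => rfl
      have e2 : ∀ i, ((WithLp.equiv 2 (I → ℂ)).symm fun i' => x (i', j)) i = x (i, j) :=
        fun _ => rfl
      simp_rw [e1, e2] at hWj
      have h2 : ∑ i, ‖((extid W : Matrix (I × J) (I × J) ℂ) *ᵥ x) (i, j)‖ ^ 2
          = ∑ i, ‖(W *ᵥ fun i' => x (i', j)) i‖ ^ 2 :=
        Finset.sum_congr rfl fun i _ => by rw [extid_mulVec]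
      rw [h2]
      calc ∑ i, ‖(W *ᵥ fun i' => x (i', j)) i‖ ^ 2
          = Real.sqrt (∑ i, ‖(W *ᵥ fun i' => x (i', j)) i‖ ^ 2) ^ 2 :=
            (Real.sq_sqrt (by positivity)).symm
        _ ≤ (opNorm W * Real.sqrt (∑ i, ‖x (i, j)‖ ^ 2)) ^ 2 :=
            pow_le_pow_left₀ (Real.sqrt_nonneg _) hWj 2
        _ = opNorm W ^ 2 * ∑ i, ‖x (i, j)‖ ^ 2 := by
            rw [mul_pow, Real.sq_sqrt (by positivity)]
    calc ∑ i, ∑ j, ‖((extid W : Matrix (I × J) (I × J) ℂ) *ᵥ x) (i, j)‖ ^ 2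
        = ∑ j, ∑ i, ‖((extid W : Matrix (I × J) (I × J) ℂ) *ᵥ x) (i, j)‖ ^ 2 :=
          Finset.sum_comm
      _ ≤ ∑ j, (opNorm W ^ 2 * ∑ i, ‖x (i, j)‖ ^ 2) := Finset.sum_le_sum fun j _ => step j
      _ = opNorm W ^ 2 * ∑ j, ∑ i, ‖x (i, j)‖ ^ 2 := by rw [← Finset.mul_sum]
      _ = opNorm W ^ 2 * ∑ i, ∑ j, ‖x (i, j)‖ ^ 2 := by rw [Finset.sum_comm (γ := I)]
  calc Real.sqrt (∑ p : I × J, ‖((WithLp.equiv 2 (I × J → ℂ)).symm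
          ((extid W : Matrix (I × J) (I × J) ℂ) *ᵥ x)) p‖ ^ 2)
      ≤ Real.sqrt (opNorm W ^ 2 * ∑ p : I × J, ‖((WithLp.equiv 2 (I × J → ℂ)).symm x) p‖ ^ 2) :=
        Real.sqrt_le_sqrt key
    _ = opNorm W * Real.sqrt (∑ p : I × J, ‖((WithLp.equiv 2 (I × J → ℂ)).symm x) p‖ ^ 2) := by
        rw [Real.sqrt_mul (by positivity), Real.sqrt_sq (opNorm_nonneg W)]

end Main

/-- For complex matrices `X, M, Y` indexed by `I × J`,
`‖Tr_J(X M Y)‖_tr ≤ ‖X‖ ‖Y‖ ‖M‖_tr`. -/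
theorem traceNorm_partialTrace_le {I J : Type*}
    [Fintype I] [Fintype J] [Nonempty I] [Nonempty J] [DecidableEq I] [DecidableEq J]
    (X M Y : Matrix (I × J) (I × J) ℂ) :
    traceNorm (partialTrace (X * M * Y)) ≤ opNorm X * opNorm Y * traceNorm M := by
  obtain ⟨W, hW1, hWtr⟩ := TNAux.exists_dual (partialTrace (X * M * Y))
  set K : Matrix (I × J) (I × J) ℂ := extid W with hK
  have htr : (W * partialTrace (X * M * Y)).trace = ((Y * K * X) * M).trace := by
    rw [trace_mul_partialTrace]
    calc (K * (X * M * Y)).trace = ((K * X * M) * Y).trace := by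
          rw [← Matrix.mul_assoc, ← Matrix.mul_assoc]
      _ = (Y * (K * X * M)).trace := (Matrix.trace_mul_comm _ _)
      _ = ((Y * K * X) * M).trace := by rw [← Matrix.mul_assoc, ← Matrix.mul_assoc]
  have h1 : traceNorm (partialTrace (X * M * Y)) ≤ ‖((Y * K * X) * M).trace‖ := by
    rw [← htr, hWtr]
    rw [Complex.norm_real]
    exact le_abs_self _
  have h2 := TNAux.trace_mul_le M (Y * K * X)
  have hYKX : opNorm (Y * K * X) ≤ opNorm X * opNorm Y := by
    calc opNorm (Y * K * X) ≤ opNorm (Y * K) * opNorm X := TNAux.opNorm_mul_le _ _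
      _ ≤ (opNorm Y * opNorm K) * opNorm X :=
          mul_le_mul_of_nonneg_right (TNAux.opNorm_mul_le _ _) (TNAux.opNorm_nonneg _)
      _ ≤ (opNorm Y * opNorm W) * opNorm X := by
          refine mul_le_mul_of_nonneg_right ?_ (TNAux.opNorm_nonneg _)
          exact mul_le_mul_of_nonneg_left (opNorm_extid_le W) (TNAux.opNorm_nonneg _)
      _ ≤ (opNorm Y * 1) * opNorm X := by
          refine mul_le_mul_of_nonneg_right ?_ (TNAux.opNorm_nonneg _)
          exact mul_le_mul_of_nonneg_left hW1 (TNAux.opNorm_nonneg _)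
      _ = opNorm X * opNorm Y := by ring
  calc traceNorm (partialTrace (X * M * Y))
      ≤ ‖((Y * K * X) * M).trace‖ := h1
    _ ≤ opNorm (Y * K * X) * traceNorm M := h2
    _ ≤ (opNorm X * opNorm Y) * traceNorm M :=
        mul_le_mul_of_nonneg_right hYKX (TNAux.traceNorm_nonneg M)
    _ = opNorm X * opNorm Y * traceNorm M := rfl
end
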